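/- arXiv:1708.06785 — 7 statements merged into one kernel-verified Lean document; each statement's English description precedes it below -/
import Mathlib

section
/- In the discrete-time dual risk model, for integers u ≥ 1 and n ≥ u, the probability that the reserve process started at u first hits level zero exactly at time n is P_u(τ* = n) = (u/n)·p^{*n}_{n−u}, where p^{*n}_k = P(Y_1 + … + Y_n = k) is the n-fold convolution of the p.m.f. of Y_1. -/
open MeasureTheory ProbabilityTheory

noncomputable section

variable {Ω : Type*} [MeasurableSpace Ω]

/-- The reserve process of the discrete-time dual risk model with initial capital `u`:
`R*_n = u - n + ∑_{i=1}^n Y_i`. -/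
def reserve (Y : ℕ → Ω → ℕ) (u : ℤ) (n : ℕ) (ω : Ω) : ℤ :=
  u - n + ∑ i ∈ Finset.range n, (Y i ω : ℤ)

/-- The probability mass function of the gain size distribution: `p_k = P(Y_1 = k)`. -/
def gainPMF (μ : Measure Ω) (Y : ℕ → Ω → ℕ) (k : ℕ) : ℝ :=
  (μ {ω | Y 0 ω = k}).toReal

/-- The `n`-fold convolution of the gain size pmf: `p^{*n}_k = P(Y_1 + ⋯ + Y_n = k)`
(with `p^{*0}_k = 1` iff `k = 0`, automatically, since the empty sum is `0`). -/
def conv (μ : Measure Ω) (Y : ℕ → Ω → ℕ) (n k : ℕ) : ℝ :=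
  (μ {ω | ∑ i ∈ Finset.range n, Y i ω = k}).toReal

/-- The gains `(Y_i)` are i.i.d. (and measurable). -/
def IsIID (μ : Measure Ω) (Y : ℕ → Ω → ℕ) : Prop :=
  (∀ i, Measurable (Y i)) ∧
    iIndepFun Y μ ∧ ∀ i, IdentDistrib (Y i) (Y 0) μ μ

/-- Net profit condition: `μ = E[Y_1] > 1` (in particular the mean is finite). -/
def NetProfit (μ : Measure Ω) (Y : ℕ → Ω → ℕ) : Prop :=
  Integrable (fun ω => (Y 0 ω : ℝ)) μ ∧ 1 < ∫ ω, (Y 0 ω : ℝ) ∂μ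

/-- Parisian ruin with delay `r` happens, with the deficit window starting with a
down-crossing (from level `0` to level `-1`) at time `s`: the reserve stays strictly
negative throughout the `r + 1` consecutive periods `s, s+1, …, s+r`. -/
def parisianWindow (Y : ℕ → Ω → ℕ) (u : ℤ) (r s : ℕ) (ω : Ω) : Prop :=
  1 ≤ s ∧ reserve Y u (s - 1) ω = 0 ∧ reserve Y u s ω = -1 ∧
    ∀ m, s ≤ m → m ≤ s + r → reserve Y u m ω < 0

/-- Finite-time Parisian ruin probability `ψ*_r(u,t) = P_u(τ^r < t)`:
the Parisian ruin time `τ^r = s + r` exceeds some down-crossing time `s` by `r`. -/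
def parisianRuinBy (μ : Measure Ω) (Y : ℕ → Ω → ℕ) (u : ℤ) (r t : ℕ) : ℝ :=
  (μ {ω | ∃ s, parisianWindow Y u r s ω ∧ s + r < t}).toReal

/-- Infinite-time Parisian ruin probability `ψ*_r(u) = P_u(τ^r < ∞)`. -/
def parisianRuin (μ : Measure Ω) (Y : ℕ → Ω → ℕ) (u : ℤ) (r : ℕ) : ℝ :=
  (μ {ω | ∃ s, parisianWindow Y u r s ω}).toReal

/-- Infinite-time dual ruin probability `ψ*(u) = P_u(τ* < ∞)`, where
`τ* = inf{n : R*_n = 0}`. -/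
def dualRuinProb (μ : Measure Ω) (Y : ℕ → Ω → ℕ) (u : ℤ) : ℝ :=
  (μ {ω | ∃ n, reserve Y u n ω = 0}).toReal

/-- The event `{τ* = n}` for the dual risk model started at `u`:
the reserve first hits level `0` exactly at time `n`. -/
def dualRuinAt (Y : ℕ → Ω → ℕ) (u : ℤ) (n : ℕ) : Set Ω :=
  {ω | reserve Y u n ω = 0 ∧ ∀ m < n, reserve Y u m ω ≠ 0}

/-- The event `{τ⁻ = n, R*_{τ⁻} = k}` for the process started at `-1`: the recovery
(first return to a non-negative level) happens at time `n` with level `k` at recovery. -/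
def recoveryAt (Y : ℕ → Ω → ℕ) (n k : ℕ) : Set Ω :=
  {ω | reserve Y (-1) n ω = (k : ℤ) ∧ ∀ s < n, reserve Y (-1) s ω < 0}

/-- `P_{-1}(τ⁻ ≤ r, R*_{τ⁻} = k)`: starting from `-1`, recovery happens within `r`
periods, with level `k` at recovery. -/
def recoveryWithinProb (μ : Measure Ω) (Y : ℕ → Ω → ℕ) (r k : ℕ) : ℝ :=
  (μ {ω | ∃ n, 1 ≤ n ∧ n ≤ r ∧ reserve Y (-1) n ω = (k : ℤ) ∧
      ∀ s < n, reserve Y (-1) s ω < 0}).toReal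

/-- Finite-time survival probability `φ(v,t)` of the compound binomial risk process
`R_n = v + n - ∑_{i=1}^n Y_i`. -/
def classicalSurvival (μ : Measure Ω) (Y : ℕ → Ω → ℕ) (v : ℕ) (t : ℕ) : ℝ :=
  (μ {ω | ∀ n < t, 0 < (v : ℤ) + n - ∑ i ∈ Finset.range n, (Y i ω : ℤ)}).toReal
section CycleLemma

/-- If `f 0 = 0`, `f` has upward steps at most `1`, and `f` avoids `u ≥ 1` before time `n`,
then `f` stays below `u` before time `n`. -/
lemma ne_imp_lt_of_steps {u : ℤ} (hu : 1 ≤ u) (f : ℕ → ℤ) (h0 : f 0 = 0)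
    (hstep : ∀ k, f (k + 1) ≤ f k + 1) {n : ℕ} (hne : ∀ m < n, f m ≠ u) :
    ∀ m < n, f m < u := by
  intro m hm
  induction m with
  | zero => omega
  | succ k ih =>
    have hk := ih (by omega)
    have h1 := hstep k
    have h2 := hne (k + 1) hm
    omega

/-- **Cycle lemma.** If `y 0, …, y (n-1)` are naturals summing to `n - u` with
`1 ≤ u ≤ n`, then exactly `u` of the `n` cyclic rotations of the sequence have
the walk `m ↦ m - ∑_{i<m} y_i` first hit `u` at time `n`. -/
lemma cycleCount (n u : ℕ) (hu : 1 ≤ u) (hn : u ≤ n) (y : ℕ → ℕ)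
    (hsum : ∑ i ∈ Finset.range n, (y i : ℤ) = (n : ℤ) - u) :
    ((Finset.range n).filter (fun j => ∀ m < n,
        (m : ℤ) - ∑ i ∈ Finset.range m, (y ((i + j) % n) : ℤ) ≠ (u : ℤ))).card = u := by
  classical
  have npos : 0 < n := lt_of_lt_of_le hu hn
  set C : ℕ → ℤ := fun m => (m : ℤ) - ∑ i ∈ Finset.range m, (y (i % n) : ℤ) with hCdef
  have hC0 : C 0 = 0 := by simp [hCdef]
  have hstep : ∀ m, C (m + 1) = C m + (1 - (y (m % n) : ℤ)) := by
    intro m; simp [hCdef, Finset.sum_range_succ]; ring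
  have hstep' : ∀ m, C (m + 1) ≤ C m + 1 := by
    intro m; rw [hstep]; have : (0 : ℤ) ≤ (y (m % n) : ℤ) := Int.natCast_nonneg _
    omega
  have hCn : C n = u := by
    have h1 : ∑ i ∈ Finset.range n, (y (i % n) : ℤ) = ∑ i ∈ Finset.range n, (y i : ℤ) :=
      Finset.sum_congr rfl fun i hi => by rw [Nat.mod_eq_of_lt (Finset.mem_range.mp hi)]
    simp only [hCdef]; rw [h1, hsum]; ring
  have hper : ∀ m, C (m + n) = C m + u := by
    intro m
    induction m with
    | zero => simpa [hC0] using hCn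
    | succ k ih =>
      have e1 : k + 1 + n = (k + n) + 1 := by ring
      rw [e1, hstep, ih, hstep, Nat.add_mod_right]
      ring
  -- rotated partial sums
  have hrot : ∀ (j m : ℕ), (m : ℤ) - ∑ i ∈ Finset.range m, (y ((i + j) % n) : ℤ) = C (j + m) - C j := by
    intro j m
    have h1 : ∑ i ∈ Finset.range (j + m), (y (i % n) : ℤ)
        = ∑ i ∈ Finset.range j, (y (i % n) : ℤ) + ∑ i ∈ Finset.Ico j (j + m), (y (i % n) : ℤ) :=
      (Finset.sum_range_add_sum_Ico _ (by omega)).symm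
    have h2 : ∑ i ∈ Finset.Ico j (j + m), (y (i % n) : ℤ)
        = ∑ i ∈ Finset.range m, (y ((j + i) % n) : ℤ) := by
      rw [Finset.sum_Ico_eq_sum_range]; simp
    have h3 : ∑ i ∈ Finset.range m, (y ((j + i) % n) : ℤ)
        = ∑ i ∈ Finset.range m, (y ((i + j) % n) : ℤ) := by
      refine Finset.sum_congr rfl fun i _ => by rw [Nat.add_comm j i]
    simp only [hCdef]
    rw [h1, h2, h3]
    push_cast
    ring
  set Rec : ℕ → Prop := fun i => ∀ l < i, C l < C i with hRecdef
  -- goodness of rotation j is equivalent to a record at j + n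
  have hgood : ∀ j < n, ((∀ m < n, (m : ℤ) - ∑ i ∈ Finset.range m, (y ((i + j) % n) : ℤ) ≠ u)
      ↔ Rec (j + n)) := by
    intro j hj
    constructor
    · intro hne l hl
      have hlt : ∀ m < n, C (j + m) - C j < u := by
        refine ne_imp_lt_of_steps (by exact_mod_cast hu) (fun m => C (j + m) - C j)
          (by simp) (fun k => ?_) (fun m hm => ?_)
        · show C (j + (k+1)) - C j ≤ (C (j + k) - C j) + 1
          have := hstep' (j + k)
          have e : j + (k+1) = (j + k) + 1 := by ring
          rw [e]; omega
        · show C (j + m) - C j ≠ u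
          have := hne m hm; rw [hrot j m] at this; exact this
      have hjn : C (j + n) = C j + u := hper j
      rcases le_or_gt j l with h | h
      · have hm : l - j < n := by omega
        have := hlt (l - j) hm
        have e : j + (l - j) = l := by omega
        rw [e] at this; omega
      · have hm : l + n - j < n := by omega
        have := hlt (l + n - j) hm
        have e : j + (l + n - j) = l + n := by omega
        rw [e] at this
        have := hper l
        omega
    · intro hrec m hm
      rw [hrot j m]
      have := hrec (j + m) (by omega)
      have := hper j
      omega
  -- transport to records in [n, 2n)
  have hcard1 : ((Finset.range n).filter (fun j => ∀ m < n,
        (m : ℤ) - ∑ i ∈ Finset.range m, (y ((i + j) % n) : ℤ) ≠ (u : ℤ))).card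
      = ((Finset.Ico n (2 * n)).filter Rec).card := by
    refine Finset.card_bij (fun j _ => j + n) ?_ ?_ ?_
    · intro j hj
      simp only [Finset.mem_filter, Finset.mem_range] at hj
      simp only [Finset.mem_filter, Finset.mem_Ico]
      exact ⟨⟨by omega, by omega⟩, (hgood j hj.1).mp hj.2⟩
    · intro a ha b hb h; omega
    · intro i hi
      simp only [Finset.mem_filter, Finset.mem_Ico] at hi
      have hmem : i - n ∈ (Finset.range n).filter (fun j => ∀ m < n,
          (m : ℤ) - ∑ i ∈ Finset.range m, (y ((i + j) % n) : ℤ) ≠ (u : ℤ)) := by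
        simp only [Finset.mem_filter, Finset.mem_range]
        have e : i - n + n = i := by omega
        refine ⟨by omega, (hgood (i - n) (by omega)).mpr ?_⟩
        rw [e]; exact hi.2
      exact ⟨i - n, hmem, by omega⟩
  rw [hcard1]
  -- count records via their values
  have hne0 : (Finset.range n).Nonempty := ⟨0, Finset.mem_range.mpr npos⟩
  set M : ℤ := (Finset.range n).sup' hne0 C with hMdef
  have hM_le : ∀ k < n, C k ≤ M := fun k hk => Finset.le_sup' C (Finset.mem_range.mpr hk)
  obtain ⟨l0, hl0mem, hl0⟩ := Finset.exists_mem_eq_sup' hne0 C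
  rw [Finset.mem_range] at hl0mem
  have hcard2 : ((Finset.Ico n (2 * n)).filter Rec).card = (Finset.Ioc M (M + u)).card := by
    refine Finset.card_bij (fun i _ => C i) ?_ ?_ ?_
    · intro i hi
      simp only [Finset.mem_filter, Finset.mem_Ico] at hi
      obtain ⟨⟨h1, h2⟩, hrec⟩ := hi
      simp only [Finset.mem_Ioc]
      constructor
      · rw [hMdef, hl0]; exact hrec l0 (by omega)
      · have e : i - n + n = i := by omega
        have := hper (i - n)
        rw [e] at this
        have := hM_le (i - n) (by omega)
        omega
    · intro a ha b hb h
      simp only [Finset.mem_filter, Finset.mem_Ico] at ha hb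
      rcases lt_trichotomy a b with hab | hab | hab
      · have := hb.2 a hab; omega
      · exact hab
      · have := ha.2 b hab; omega
    · intro v hv
      simp only [Finset.mem_Ioc] at hv
      have hPex : ∃ m, v ≤ C m := by
        refine ⟨l0 + n, ?_⟩
        rw [hper l0, ← hl0]; omega
      set i := Nat.find hPex with hidef
      have hPi : v ≤ C i := Nat.find_spec hPex
      have hmin : ∀ l < i, C l < v := fun l hl => by
        have := Nat.find_min hPex hl; omega
      have hin : n ≤ i := by
        by_contra h
        have := hM_le i (by omega)
        omega
      have hi2n : i < 2 * n := by
        have : i ≤ l0 + n := Nat.find_le (by rw [hper l0, ← hl0]; omega)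
        omega
      have hCi : C i = v := by
        have h1 : i - 1 + 1 = i := by omega
        have h2 := hstep' (i - 1)
        rw [h1] at h2
        have := hmin (i - 1) (by omega)
        omega
      refine ⟨i, ?_, hCi⟩
      simp only [Finset.mem_filter, Finset.mem_Ico]
      exact ⟨⟨hin, hi2n⟩, fun l hl => by rw [hCi]; exact hmin l hl⟩
  rw [hcard2, Int.card_Ioc]
  omega

end CycleLemma

section Exchangeable


lemma meas_vec_eq {μ : Measure Ω} {Y : ℕ → Ω → ℕ} (hY : IsIID μ Y) (n : ℕ) (x : Fin n → ℕ) :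
    μ {ω | ∀ i : Fin n, Y i ω = x i} = ∏ i : Fin n, μ {ω | Y 0 ω = x i} := by
  classical
  set x' : ℕ → ℕ := fun k => if h : k < n then x ⟨k, h⟩ else 0 with hx'
  have h := (iIndepFun_iff_measure_inter_preimage_eq_mul.mp hY.2.1) (Finset.range n)
      (sets := fun k => ({x' k} : Set ℕ)) (fun i _ => measurableSet_singleton _)
  have hset : (⋂ i ∈ Finset.range n, Y i ⁻¹' {x' i}) = {ω | ∀ i : Fin n, Y i ω = x i} := by
    ext ω
    simp only [Set.mem_iInter, Set.mem_preimage, Set.mem_singleton_iff, Finset.mem_range,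
      Set.mem_setOf_eq]
    constructor
    · intro h i
      have := h i.1 i.2
      simpa [hx', i.2] using this
    · intro h k hk
      simpa [hx', hk] using h ⟨k, hk⟩
  rw [hset] at h
  rw [h, ← Fin.prod_univ_eq_prod_range (fun k => μ (Y k ⁻¹' {x' k})) n]
  refine Finset.prod_congr rfl fun i _ => ?_
  have h1 : μ (Y (i : ℕ) ⁻¹' {x' (i : ℕ)}) = μ (Y 0 ⁻¹' {x' (i : ℕ)}) :=
    (hY.2.2 i).measure_mem_eq (measurableSet_singleton _)
  rw [h1]
  have h2 : x' (i : ℕ) = x i := by rw [hx']; simp [i.2]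
  rw [h2]
  rfl

lemma meas_vec_perm {μ : Measure Ω} {Y : ℕ → Ω → ℕ} (hY : IsIID μ Y) (n : ℕ)
    (e : Fin n ≃ Fin n) (x : Fin n → ℕ) :
    μ {ω | ∀ i : Fin n, Y (e i) ω = x i} = ∏ i : Fin n, μ {ω | Y 0 ω = x i} := by
  have hset : {ω | ∀ i : Fin n, Y (e i) ω = x i}
      = {ω | ∀ i : Fin n, Y i ω = (x ∘ e.symm) i} := by
    ext ω
    constructor
    · intro h i; have := h (e.symm i); simpa using this
    · intro h i; have := h (e i); simpa using this
  rw [hset, meas_vec_eq hY n (x ∘ e.symm)]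
  exact Equiv.prod_comp e.symm fun i => μ {ω | Y 0 ω = x i}

lemma meas_event {μ : Measure Ω} {Y : ℕ → Ω → ℕ} (hY : IsIID μ Y) (n : ℕ)
    (e : Fin n ≃ Fin n) (S : Set (Fin n → ℕ)) :
    μ {ω | (fun i => Y (e i) ω) ∈ S}
      = ∑' x : Fin n → ℕ, S.indicator (fun x => ∏ i, μ {ω | Y 0 ω = x i}) x := by
  classical
  have hU : {ω | (fun i => Y (e i) ω) ∈ S}
      = ⋃ x : S, {ω | ∀ i : Fin n, Y (e i) ω = (x : Fin n → ℕ) i} := by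
    ext ω
    simp only [Set.mem_setOf_eq, Set.mem_iUnion]
    constructor
    · intro h; exact ⟨⟨fun i => Y (e i) ω, h⟩, fun i => rfl⟩
    · rintro ⟨x, hx⟩
      have : (fun i => Y (e i) ω) = (x : Fin n → ℕ) := funext hx
      rw [this]; exact x.2
  have hdisj : Pairwise (Function.onFun Disjoint
      fun x : S => {ω | ∀ i : Fin n, Y (e i) ω = (x : Fin n → ℕ) i}) := by
    intro x x' hxx'
    refine Set.disjoint_left.mpr fun ω h1 h2 => hxx' ?_
    apply Subtype.ext
    funext i
    rw [← h1 i, ← h2 i]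
  have hmeas : ∀ x : S, MeasurableSet {ω | ∀ i : Fin n, Y (e i) ω = (x : Fin n → ℕ) i} := by
    intro x
    have : {ω | ∀ i : Fin n, Y (e i) ω = (x : Fin n → ℕ) i}
        = ⋂ i : Fin n, Y (e i) ⁻¹' {(x : Fin n → ℕ) i} := by
      ext ω; simp [Set.mem_iInter]
    rw [this]
    exact MeasurableSet.iInter fun i => (hY.1 _) (measurableSet_singleton _)
  rw [hU, measure_iUnion hdisj hmeas]
  have : ∀ x : S, μ {ω | ∀ i : Fin n, Y (e i) ω = (x : Fin n → ℕ) i}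
      = ∏ i, μ {ω | Y 0 ω = (x : Fin n → ℕ) i} := fun x => meas_vec_perm hY n e _
  rw [tsum_congr this]
  exact tsum_subtype S fun x => ∏ i, μ {ω | Y 0 ω = x i}

end Exchangeable

open scoped ENNReal

/-- **Lemma 2 (hitting time law).** In the discrete-time dual risk model, for `u ≥ 1` and
`n ≥ u`, `P_u(τ* = n) = (u/n) · p^{*n}_{n-u}`. -/
theorem dual_ruin_time_law
    (μ : Measure Ω) [IsProbabilityMeasure μ] (Y : ℕ → Ω → ℕ) (hY : IsIID μ Y)
    (u n : ℕ) (hu : 1 ≤ u) (hn : u ≤ n) :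
    (μ (dualRuinAt Y (u : ℤ) n)).toReal = (u : ℝ) / (n : ℝ) * conv μ Y n (n - u) := by

  classical
  have npos : 0 < n := lt_of_lt_of_le hu hn
  haveI : NeZero n := ⟨by omega⟩
  -- extension of a tuple to ℕ
  set ext : (Fin n → ℕ) → ℕ → ℕ := fun x k => if h : k < n then x ⟨k, h⟩ else 0 with hext
  set RV : (Fin n → ℕ) → ℕ → ℤ :=
    fun x m => (u : ℤ) - m + ∑ i ∈ Finset.range m, (ext x i : ℤ) with hRV
  set A : Set (Fin n → ℕ) := {x | RV x n = 0 ∧ ∀ m < n, RV x m ≠ 0} with hA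
  set B : Set (Fin n → ℕ) := {x | ∑ i ∈ Finset.range n, (ext x i : ℤ) = (n : ℤ) - u} with hB
  set F : (Fin n → ℕ) → ℝ≥0∞ := fun x => ∏ i, μ {ω | Y 0 ω = x i} with hF
  set e : ℕ → (Fin n ≃ Fin n) := fun j => Equiv.addRight ((Fin.ofNat n j)) with he
  set As : ℕ → Set (Fin n → ℕ) := fun j => {x | (fun i => x (e j i)) ∈ A} with hAs
  have hval : ∀ (j : ℕ) (i : Fin n), ((e j i : Fin n) : ℕ) = ((i : ℕ) + j) % n := by
    intro j i
    show ((i + (Fin.ofNat n j) : Fin n) : ℕ) = ((i : ℕ) + j) % n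
    rw [Fin.val_add, Fin.val_ofNat]
    rw [Nat.add_mod (i : ℕ) (j % n) n, Nat.mod_mod_of_dvd j dvd_rfl, ← Nat.add_mod]
  have hextrot : ∀ (j : ℕ) (x : Fin n → ℕ) (k : ℕ), k < n →
      ext (fun i => x (e j i)) k = ext x ((k + j) % n) := by
    intro j x k hk
    have h2 : (k + j) % n < n := Nat.mod_lt _ npos
    rw [hext]
    simp only [dif_pos hk, dif_pos h2]
    congr 1
    apply Fin.ext
    rw [hval j ⟨k, hk⟩]
  have hextsum : ∀ z : Fin n → ℕ,
      ∑ i ∈ Finset.range n, (ext z i : ℤ) = ∑ i : Fin n, (z i : ℤ) := by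
    intro z
    rw [← Fin.sum_univ_eq_sum_range (fun k => (ext z k : ℤ)) n]
    exact Finset.sum_congr rfl fun i _ => by simp [hext, i.2]
  have hsumrot : ∀ (j : ℕ) (x : Fin n → ℕ),
      ∑ i ∈ Finset.range n, (ext (fun i => x (e j i)) i : ℤ)
        = ∑ i ∈ Finset.range n, (ext x i : ℤ) := by
    intro j x
    rw [hextsum (fun i => x (e j i)), hextsum x]
    exact Equiv.sum_comp (e j) fun i => ((x i : ℕ) : ℤ)
  -- identification of the ruin event
  have hAset : dualRuinAt Y (u : ℤ) n = {ω | (fun i : Fin n => Y i ω) ∈ A} := by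
    ext ω
    have hres : ∀ m ≤ n, reserve Y (u : ℤ) m ω = RV (fun i : Fin n => Y i ω) m := by
      intro m hm
      simp only [reserve, hRV]
      congr 1
      refine Finset.sum_congr rfl fun i hi => ?_
      have hi' : i < n := lt_of_lt_of_le (Finset.mem_range.mp hi) hm
      simp [hext, hi']
    simp only [dualRuinAt, Set.mem_setOf_eq, hA]
    constructor
    · rintro ⟨h1, h2⟩
      exact ⟨by rw [← hres n le_rfl]; exact h1,
        fun m hm => by rw [← hres m hm.le]; exact h2 m hm⟩
    · rintro ⟨h1, h2⟩
      exact ⟨by rw [hres n le_rfl]; exact h1,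
        fun m hm => by rw [hres m hm.le]; exact h2 m hm⟩
  -- identification of the sum event
  have hBset : {ω | ∑ i ∈ Finset.range n, Y i ω = n - u} = {ω | (fun i : Fin n => Y i ω) ∈ B} := by
    ext ω
    simp only [Set.mem_setOf_eq, hB]
    have h1 : ∑ i ∈ Finset.range n, (ext (fun i : Fin n => Y i ω) i : ℤ)
        = ((∑ i ∈ Finset.range n, Y i ω : ℕ) : ℤ) := by
      rw [Nat.cast_sum]
      refine Finset.sum_congr rfl fun i hi => ?_
      have hi' : i < n := Finset.mem_range.mp hi
      simp [hext, hi']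
    rw [h1, ← Nat.cast_sub hn]
    exact (Nat.cast_inj (R := ℤ)).symm
  -- the key identity in ℝ≥0∞
  have key : (n : ℝ≥0∞) * μ (dualRuinAt Y (u : ℤ) n)
      = (u : ℝ≥0∞) * μ {ω | ∑ i ∈ Finset.range n, Y i ω = n - u} := by
    have hAsEvent : ∀ j : ℕ,
        {ω | (fun i : Fin n => Y i ω) ∈ As j} = {ω | (fun i : Fin n => Y ((e j) i) ω) ∈ A} := by
      intro j; rfl
    have h1 : ∀ j ∈ Finset.range n,
        μ {ω | (fun i : Fin n => Y i ω) ∈ As j} = μ (dualRuinAt Y (u : ℤ) n) := by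
      intro j _
      rw [hAset, hAsEvent j, meas_event hY n (e j) A]
      exact (meas_event hY n (Equiv.refl (Fin n)) A).symm
    have h2 : ∀ j ∈ Finset.range n,
        μ {ω | (fun i : Fin n => Y i ω) ∈ As j} = ∑' x : Fin n → ℕ, (As j).indicator F x :=
      fun j _ => meas_event hY n (Equiv.refl (Fin n)) (As j)
    have h3 : ∀ x : Fin n → ℕ,
        ∑ j ∈ Finset.range n, (As j).indicator F x = (u : ℝ≥0∞) * B.indicator F x := by
      intro x
      have hAsMem : ∀ j : ℕ, x ∈ As j ↔
          (RV (fun i => x (e j i)) n = 0 ∧ ∀ m < n, RV (fun i => x (e j i)) m ≠ 0) := by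
        intro j; rw [hAs]; rfl
      have hsums : ∀ (j : ℕ) (m : ℕ), m ≤ n →
          ∑ i ∈ Finset.range m, (ext (fun i => x (e j i)) i : ℤ)
            = ∑ i ∈ Finset.range m, (ext x ((i + j) % n) : ℤ) := by
        intro j m hm
        refine Finset.sum_congr rfl fun i hi => ?_
        rw [hextrot j x i (lt_of_lt_of_le (Finset.mem_range.mp hi) hm)]
      by_cases hxB : x ∈ B
      · have hxB' : ∑ i ∈ Finset.range n, (ext x i : ℤ) = (n : ℤ) - u := hxB
        have hiff : ∀ j ∈ Finset.range n, (x ∈ As j ↔ ∀ m < n,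
            (m : ℤ) - ∑ i ∈ Finset.range m, (ext x ((i + j) % n) : ℤ) ≠ (u : ℤ)) := by
          intro j _
          rw [hAsMem j]
          constructor
          · intro hx m hm
            have h4 := hx.2 m hm
            rw [hRV] at h4
            simp only at h4
            rw [hsums j m hm.le] at h4
            omega
          · intro hgood
            constructor
            · rw [hRV]
              simp only
              rw [hsums j n le_rfl]
              have h5 : ∑ i ∈ Finset.range n, (ext x ((i + j) % n) : ℤ)
                  = (n : ℤ) - u := by
                rw [← hsums j n le_rfl, hsumrot j x, hxB']
              rw [h5]; ring
            · intro m hm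
              have h4 := hgood m hm
              rw [hRV]
              simp only
              rw [hsums j m hm.le]
              omega
        have hfilter : (Finset.range n).filter (fun j => x ∈ As j)
            = (Finset.range n).filter (fun j => ∀ m < n,
                (m : ℤ) - ∑ i ∈ Finset.range m, (ext x ((i + j) % n) : ℤ) ≠ (u : ℤ)) :=
          Finset.filter_congr fun j hj => by rw [hiff j hj]
        have hcount : ((Finset.range n).filter (fun j => x ∈ As j)).card = u := by
          rw [hfilter]
          exact cycleCount n u hu hn (ext x) hxB'
        simp_rw [Set.indicator_apply]
        rw [Finset.sum_ite, Finset.sum_const, Finset.sum_const_zero, add_zero,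
          hcount, if_pos hxB, nsmul_eq_mul]
      · have hnot : ∀ j ∈ Finset.range n, (As j).indicator F x = 0 := by
          intro j _
          refine Set.indicator_of_notMem (fun hx => hxB ?_) F
          have h4 := ((hAsMem j).mp hx).1
          rw [hRV] at h4
          simp only at h4
          rw [hsumrot j x] at h4
          show ∑ i ∈ Finset.range n, (ext x i : ℤ) = (n : ℤ) - u
          omega
        rw [Finset.sum_congr rfl hnot, Finset.sum_const_zero,
          Set.indicator_of_notMem hxB, mul_zero]
    calc (n : ℝ≥0∞) * μ (dualRuinAt Y (u : ℤ) n)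
        = ∑ j ∈ Finset.range n, μ {ω | (fun i : Fin n => Y i ω) ∈ As j} := by
          rw [Finset.sum_congr rfl h1, Finset.sum_const, Finset.card_range, nsmul_eq_mul]
      _ = ∑ j ∈ Finset.range n, ∑' x : Fin n → ℕ, (As j).indicator F x :=
          Finset.sum_congr rfl h2
      _ = ∑' x : Fin n → ℕ, ∑ j ∈ Finset.range n, (As j).indicator F x :=
          (Summable.tsum_finsetSum fun j _ => ENNReal.summable).symm
      _ = ∑' x : Fin n → ℕ, (u : ℝ≥0∞) * B.indicator F x := tsum_congr h3
      _ = (u : ℝ≥0∞) * ∑' x : Fin n → ℕ, B.indicator F x := ENNReal.tsum_mul_left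
      _ = (u : ℝ≥0∞) * μ {ω | ∑ i ∈ Finset.range n, Y i ω = n - u} := by
          rw [hBset]
          congr 1
          exact (meas_event hY n (Equiv.refl (Fin n)) B).symm
  -- pass to real numbers
  have h := congrArg ENNReal.toReal key
  rw [ENNReal.toReal_mul, ENNReal.toReal_mul, ENNReal.toReal_natCast,
    ENNReal.toReal_natCast] at h
  simp only [conv]
  have hnR : (n : ℝ) ≠ 0 := Nat.cast_ne_zero.mpr (by omega)
  field_simp
  linarith [h]
end
end

section
/- In the discrete-time dual risk model started from R*_0 = −1, for n ∈ ℕ⁺ and k ∈ ℕ the joint distribution of the recovery time and the overshoot at recovery is P_{−1}(τ⁻ = n, R*_{τ⁻} = k) = ∑_{j=0}^{n−1} p^{*(n−1)}_j · p_{1+n−j+k} − ∑_{j=2}^{n−1} ∑_{i=2}^{j} ((n−j)/(n−i)) · p^{*(n−i)}_{j−i} · p^{*(i−1)}_i · p_{1+n−j+k}. -/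
open MeasureTheory ProbabilityTheory

noncomputable section

variable {Ω : Type*} [MeasurableSpace Ω]

section Aux

set_option linter.unusedSectionVars false

variable (μ : Measure Ω) [IsProbabilityMeasure μ] (Y : ℕ → Ω → ℕ)

/-- events determined by finitely many coordinates are measurable, and independence
splitting off one coordinate. -/
lemma aux_meas_Y_eq (hY : IsIID μ Y) (a y : ℕ) :
    μ {ω | Y a ω = y} = μ {ω | Y 0 ω = y} := by
  have h := (hY.2.2 a).measure_mem_eq (s := ({y} : Set ℕ)) (MeasurableSet.singleton y)
  simpa [Set.preimage] using h

lemma aux_split (hY : IsIID μ Y) (T : Finset ℕ) (a : ℕ) (ha : a ∉ T) (y : ℕ)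
    (C : (ℕ → ℕ) → Prop)
    (hC : ∀ g g' : ℕ → ℕ, (∀ i ∈ T, g i = g' i) → C g → C g') :
    μ ({ω | C fun i => Y i ω} ∩ {ω | Y a ω = y})
      = μ {ω | C fun i => Y i ω} * μ {ω | Y 0 ω = y} := by
  classical
  have hdisj : Disjoint T ({a} : Finset ℕ) := Finset.disjoint_singleton_right.mpr ha
  have hind := hY.2.1.indepFun_finset T {a} hdisj hY.1
  set F : Ω → (T → ℕ) := fun ω (i : T) => Y i ω with hF
  set G : Ω → (({a} : Finset ℕ) → ℕ) := fun ω (i : ({a} : Finset ℕ)) => Y i ω with hG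
  set B : Set (T → ℕ) := {v | C fun i => if h : i ∈ T then v ⟨i, h⟩ else 0} with hB
  set B' : Set (({a} : Finset ℕ) → ℕ) :=
    {v | v ⟨a, Finset.mem_singleton_self a⟩ = y} with hB'
  have hFB : F ⁻¹' B = {ω | C fun i => Y i ω} := by
    ext ω
    simp only [Set.mem_preimage, hB, Set.mem_setOf_eq, hF]
    constructor
    · intro h
      refine hC _ _ (fun i hi => ?_) h
      simp [hi]
    · intro h
      refine hC _ _ (fun i hi => ?_) h
      simp [hi]
  have hGB : G ⁻¹' B' = {ω | Y a ω = y} := by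
    ext ω; simp [hG, hB']
  have hFmeas : Measurable F := measurable_pi_lambda _ fun i => hY.1 i
  have hGmeas : Measurable G := measurable_pi_lambda _ fun i => hY.1 i
  have hBmeas : MeasurableSet B := (Set.to_countable B).measurableSet
  have hB'meas : MeasurableSet B' := (Set.to_countable B').measurableSet
  have h2 := hind.measure_inter_preimage_eq_mul B B' hBmeas hB'meas
  rw [hFB, hGB] at h2
  rw [h2, aux_meas_Y_eq μ Y hY a y]

lemma aux_measSum (hY : IsIID μ Y) (T : Finset ℕ) (c : ℕ) :
    MeasurableSet {ω | ∑ l ∈ T, Y l ω = c} := by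
  have h : Measurable fun ω => ∑ l ∈ T, Y l ω :=
    Finset.measurable_sum _ fun l _ => hY.1 l
  exact h (measurableSet_singleton c)

lemma aux_measYeq (hY : IsIID μ Y) (a y : ℕ) : MeasurableSet {ω | Y a ω = y} :=
  (hY.1 a) (measurableSet_singleton y)

lemma aux_toReal_biUnion {ι : Type*} (s : Finset ι) (E : ι → Set Ω)
    (hm : ∀ j ∈ s, MeasurableSet (E j)) (hd : (↑s : Set ι).PairwiseDisjoint E) :
    (μ (⋃ j ∈ s, E j)).toReal = ∑ j ∈ s, (μ (E j)).toReal := by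
  rw [measure_biUnion_finset hd hm]
  exact ENNReal.toReal_sum fun a _ => measure_ne_top μ _

/-- decomposition of the law of a sum over `insert a T`. -/
lemma aux_decompSum (hY : IsIID μ Y) (T : Finset ℕ) (a : ℕ) (ha : a ∉ T) (c : ℕ) :
    μ {ω | ∑ l ∈ insert a T, Y l ω = c}
      = ∑ y ∈ Finset.range (c + 1),
          μ {ω | ∑ l ∈ T, Y l ω = c - y} * μ {ω | Y 0 ω = y} := by
  classical
  have hset : {ω | ∑ l ∈ insert a T, Y l ω = c}
      = ⋃ y ∈ Finset.range (c + 1),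
          ({ω | ∑ l ∈ T, Y l ω = c - y} ∩ {ω | Y a ω = y}) := by
    ext ω
    simp only [Set.mem_setOf_eq, Set.mem_iUnion, Set.mem_inter_iff, Finset.mem_range,
      Finset.sum_insert ha]
    constructor
    · intro h
      exact ⟨Y a ω, by omega, by omega, rfl⟩
    · rintro ⟨y, hy, h1, h2⟩
      omega
  rw [hset, measure_biUnion_finset]
  · refine Finset.sum_congr rfl fun y _ => ?_
    exact aux_split μ Y hY T a ha y (fun g => ∑ l ∈ T, g l = c - y)
      (fun g g' hgg' h => by
        show ∑ l ∈ T, g' l = c - y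
        rwa [← Finset.sum_congr rfl hgg'])
  · intro y _ y' _ hne
    refine Set.disjoint_left.mpr fun ω h h' => hne ?_
    rw [← h.2, ← h'.2]
  · intro y _
    exact ((aux_measSum μ Y hY T (c - y)).inter (aux_measYeq μ Y hY a y))

/-- the law of a sum over a finset only depends on its cardinality. -/
lemma aux_sumLaw (hY : IsIID μ Y) :
    ∀ (N : ℕ) (T : Finset ℕ), T.card = N → ∀ c,
      μ {ω | ∑ l ∈ T, Y l ω = c} = μ {ω | ∑ l ∈ Finset.range N, Y l ω = c} := by
  intro N
  induction N with
  | zero =>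
    intro T hT c
    rw [Finset.card_eq_zero] at hT
    subst hT
    rfl
  | succ N ih =>
    intro T hT c
    obtain ⟨a, s, has, rfl, hs⟩ := Finset.card_eq_succ.mp hT
    rw [aux_decompSum μ Y hY s a has c]
    have hrange : (Finset.range (N + 1) : Finset ℕ) = insert N (Finset.range N) :=
      Finset.range_add_one
    rw [hrange, aux_decompSum μ Y hY (Finset.range N) N Finset.notMem_range_self c]
    exact Finset.sum_congr rfl fun y _ => by rw [ih s hs (c - y)]

end Aux

section Aux2

set_option linter.unusedSectionVars false

variable (μ : Measure Ω) [IsProbabilityMeasure μ] (Y : ℕ → Ω → ℕ)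

lemma aux_conv_card (hY : IsIID μ Y) (T : Finset ℕ) (c : ℕ) :
    (μ {ω | ∑ l ∈ T, Y l ω = c}).toReal = conv μ Y T.card c := by
  rw [conv, aux_sumLaw μ Y hY T.card T rfl c]

lemma aux_convSucc (hY : IsIID μ Y) (m j : ℕ) :
    conv μ Y (m + 1) j
      = ∑ y ∈ Finset.range (j + 1), conv μ Y m (j - y) * gainPMF μ Y y := by
  rw [conv, Finset.range_add_one]
  rw [aux_decompSum μ Y hY (Finset.range m) m Finset.notMem_range_self j]
  rw [ENNReal.toReal_sum fun a _ => ENNReal.mul_ne_top (measure_ne_top μ _) (measure_ne_top μ _)]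
  exact Finset.sum_congr rfl fun y _ => ENNReal.toReal_mul

lemma aux_conv_zero : conv μ Y 0 0 = 1 := by
  have : {ω : Ω | ∑ i ∈ Finset.range 0, Y i ω = 0} = Set.univ := by
    ext ω; simp
  rw [conv, this, measure_univ, ENNReal.toReal_one]

lemma aux_conv_one (c : ℕ) : conv μ Y 1 c = gainPMF μ Y c := by
  have h : {ω : Ω | ∑ i ∈ Finset.range 1, Y i ω = c} = {ω | Y 0 ω = c} := by
    ext ω; simp
  rw [conv, h, gainPMF]

/-- size-bias / exchangeability identity. -/
lemma aux_sizeBias (hY : IsIID μ Y) (N c : ℕ) :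
    ((N : ℝ) + 1) * ∑ y ∈ Finset.range (c + 1),
        (y : ℝ) * gainPMF μ Y y * conv μ Y N (c - y)
      = (c : ℝ) * conv μ Y (N + 1) c := by
  classical
  set s := Finset.Nat.antidiagonalTuple (N + 1) c with hs
  set A : (Fin (N + 1) → ℕ) → Set Ω := fun g => {ω | ∀ i : Fin (N + 1), Y i ω = g i} with hA
  have hAmeas : ∀ g, MeasurableSet (A g) := by
    intro g
    have : A g = ⋂ i : Fin (N + 1), {ω | Y (i : ℕ) ω = g i} := by
      ext ω; simp [hA]
    rw [this]
    exact MeasurableSet.iInter fun i => aux_measYeq μ Y hY i (g i)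
  -- the cover of the sum event by atoms
  have hcover : ∀ (E : Set ℕ), {ω | ∑ l ∈ Finset.range (N + 1), Y l ω = c} ∩ ∅ = ∅ := by
    intro E; simp
  have hsum_eq : ∀ ω : Ω, ∑ l ∈ Finset.range (N + 1), Y l ω = ∑ i : Fin (N + 1), Y (i : ℕ) ω :=
    fun ω => Finset.sum_range fun i => Y i ω
  have hcov : {ω | ∑ l ∈ Finset.range (N + 1), Y l ω = c} = ⋃ g ∈ s, A g := by
    ext ω
    simp only [Set.mem_setOf_eq, Set.mem_iUnion, hs, Finset.Nat.mem_antidiagonalTuple, hA]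
    constructor
    · intro h
      exact ⟨fun i => Y (i : ℕ) ω, by rw [← hsum_eq ω]; exact h, fun i => rfl⟩
    · rintro ⟨g, hg, hgω⟩
      rw [hsum_eq ω]
      rw [Finset.sum_congr rfl fun i _ => hgω i]
      exact hg
  have hAdisj : (↑s : Set (Fin (N + 1) → ℕ)).PairwiseDisjoint A := by
    intro g _ g' _ hne
    refine Set.disjoint_left.mpr fun ω h h' => hne ?_
    funext i
    rw [← h i, ← h' i]
  -- fiber decomposition for a fixed coordinate
  have hfiber : ∀ (i : Fin (N + 1)) (y : ℕ),
      {ω | Y (i : ℕ) ω = y} ∩ {ω | ∑ l ∈ Finset.range (N + 1), Y l ω = c}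
        = ⋃ g ∈ s.filter (fun g => g i = y), A g := by
    intro i y
    ext ω
    simp only [Set.mem_inter_iff, Set.mem_setOf_eq, Set.mem_iUnion, Finset.mem_filter, hs,
      Finset.Nat.mem_antidiagonalTuple, hA]
    constructor
    · rintro ⟨h1, h2⟩
      exact ⟨fun i => Y (i : ℕ) ω, ⟨by rw [← hsum_eq ω]; exact h2, h1⟩, fun i => rfl⟩
    · rintro ⟨g, ⟨hg, hgi⟩, hgω⟩
      constructor
      · rw [hgω i]; exact hgi
      · rw [hsum_eq ω, Finset.sum_congr rfl fun i _ => hgω i]; exact hg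
  -- measure of the {Y i = y} ∩ {sum = c} event
  have hsplit : ∀ (i : Fin (N + 1)) (y : ℕ), y ≤ c →
      (μ ({ω | Y (i : ℕ) ω = y} ∩ {ω | ∑ l ∈ Finset.range (N + 1), Y l ω = c})).toReal
        = gainPMF μ Y y * conv μ Y N (c - y) := by
    intro i y hyc
    have hiT : (i : ℕ) ∈ Finset.range (N + 1) := Finset.mem_range.mpr i.isLt
    have hseteq : {ω | Y (i : ℕ) ω = y} ∩ {ω | ∑ l ∈ Finset.range (N + 1), Y l ω = c}
        = {ω | ∑ l ∈ (Finset.range (N + 1)).erase (i : ℕ), Y l ω = c - y}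
            ∩ {ω | Y (i : ℕ) ω = y} := by
      ext ω
      simp only [Set.mem_inter_iff, Set.mem_setOf_eq]
      have herase : ∑ l ∈ (Finset.range (N + 1)).erase (i : ℕ), Y l ω + Y (i : ℕ) ω
          = ∑ l ∈ Finset.range (N + 1), Y l ω := Finset.sum_erase_add _ _ hiT
      omega
    rw [hseteq]
    rw [aux_split μ Y hY ((Finset.range (N + 1)).erase (i : ℕ)) (i : ℕ)
      (Finset.notMem_erase _ _) y
      (fun g => ∑ l ∈ (Finset.range (N + 1)).erase (i : ℕ), g l = c - y)
      (fun g g' hgg' h => by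
        show ∑ l ∈ (Finset.range (N + 1)).erase (i : ℕ), g' l = c - y
        rwa [← Finset.sum_congr rfl hgg'])]
    rw [ENNReal.toReal_mul]
    have hcard : ((Finset.range (N + 1)).erase (i : ℕ)).card = N := by
      rw [Finset.card_erase_of_mem hiT, Finset.card_range]
      omega
    rw [aux_conv_card μ Y hY _ (c - y), hcard, gainPMF, mul_comm]
  -- now the chain of equalities
  have hwsum : conv μ Y (N + 1) c = ∑ g ∈ s, (μ (A g)).toReal := by
    rw [conv, hcov]
    exact aux_toReal_biUnion μ s A (fun g _ => hAmeas g) hAdisj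
  have key : ∀ i : Fin (N + 1),
      ∑ g ∈ s, (g i : ℝ) * (μ (A g)).toReal
        = ∑ y ∈ Finset.range (c + 1), (y : ℝ) * gainPMF μ Y y * conv μ Y N (c - y) := by
    intro i
    have hmaps : ∀ g ∈ s, g i ∈ Finset.range (c + 1) := by
      intro g hg
      rw [hs, Finset.Nat.mem_antidiagonalTuple] at hg
      have : g i ≤ c := hg ▸ Finset.single_le_sum (fun _ _ => Nat.zero_le _) (Finset.mem_univ i)
      exact Finset.mem_range.mpr (by omega)
    rw [← Finset.sum_fiberwise_of_maps_to hmaps (fun g => (g i : ℝ) * (μ (A g)).toReal)]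
    refine Finset.sum_congr rfl fun y hy => ?_
    have hyc : y ≤ c := by have := Finset.mem_range.mp hy; omega
    have : ∑ g ∈ s.filter (fun g => g i = y), (g i : ℝ) * (μ (A g)).toReal
        = (y : ℝ) * ∑ g ∈ s.filter (fun g => g i = y), (μ (A g)).toReal := by
      rw [Finset.mul_sum]
      refine Finset.sum_congr rfl fun g hg => ?_
      rw [(Finset.mem_filter.mp hg).2]
    rw [this]
    have : ∑ g ∈ s.filter (fun g => g i = y), (μ (A g)).toReal
        = (μ ({ω | Y (i : ℕ) ω = y} ∩ {ω | ∑ l ∈ Finset.range (N + 1), Y l ω = c})).toReal := by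
      rw [hfiber i y]
      exact (aux_toReal_biUnion μ _ A (fun g _ => hAmeas g)
        (hAdisj.subset (Finset.coe_subset.mpr (Finset.filter_subset _ _)))).symm
    rw [this, hsplit i y hyc]
    ring
  calc ((N : ℝ) + 1) * ∑ y ∈ Finset.range (c + 1),
        (y : ℝ) * gainPMF μ Y y * conv μ Y N (c - y)
      = ∑ i : Fin (N + 1), ∑ y ∈ Finset.range (c + 1),
          (y : ℝ) * gainPMF μ Y y * conv μ Y N (c - y) := by
        rw [Finset.sum_const, Finset.card_univ, Fintype.card_fin]
        ring
    _ = ∑ i : Fin (N + 1), ∑ g ∈ s, (g i : ℝ) * (μ (A g)).toReal := by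
        exact Finset.sum_congr rfl fun i _ => (key i).symm
    _ = ∑ g ∈ s, ∑ i : Fin (N + 1), (g i : ℝ) * (μ (A g)).toReal := Finset.sum_comm
    _ = ∑ g ∈ s, (c : ℝ) * (μ (A g)).toReal := by
        refine Finset.sum_congr rfl fun g hg => ?_
        rw [hs, Finset.Nat.mem_antidiagonalTuple] at hg
        rw [← Finset.sum_mul]
        congr 1
        rw [← hg]
        exact (Nat.cast_sum _ _).symm
    _ = (c : ℝ) * conv μ Y (N + 1) c := by rw [hwsum, Finset.mul_sum]

end Aux2

section Aux3

set_option linter.unusedSectionVars false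

variable (μ : Measure Ω) [IsProbabilityMeasure μ] (Y : ℕ → Ω → ℕ)

/-- the property that the path `g` accumulates to `j` in `m` steps staying below the
diagonal. -/
def Qpred (m j : ℕ) (g : ℕ → ℕ) : Prop :=
  (∑ i ∈ Finset.range m, g i) = j ∧ ∀ s ≤ m, (∑ i ∈ Finset.range s, g i) ≤ s

lemma aux_Qpred_congr (m j : ℕ) (g g' : ℕ → ℕ)
    (hgg' : ∀ i ∈ Finset.range m, g i = g' i) (h : Qpred m j g) : Qpred m j g' := by
  obtain ⟨h1, h2⟩ := h
  constructor
  · rw [← Finset.sum_congr rfl hgg']; exact h1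
  · intro s hs
    rw [← Finset.sum_congr rfl fun i (hi : i ∈ Finset.range s) =>
      hgg' i (Finset.mem_range.mpr (by have := Finset.mem_range.mp hi; omega))]
    exact h2 s hs

/-- the event that `S_m = j` while the path stays below the diagonal up to time `m`. -/
def Qset (m j : ℕ) : Set Ω := {ω | Qpred m j fun i => Y i ω}

/-- its probability. -/
def qv (m j : ℕ) : ℝ := (μ (Qset Y m j)).toReal

lemma aux_measQ (hY : IsIID μ Y) (m j : ℕ) : MeasurableSet (Qset Y m j) := by
  have h1 : Qset Y m j = {ω | ∑ i ∈ Finset.range m, Y i ω = j}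
      ∩ ⋂ s ∈ Finset.range (m + 1), {ω | ∑ i ∈ Finset.range s, Y i ω ≤ s} := by
    ext ω
    simp only [Qset, Qpred, Set.mem_setOf_eq, Set.mem_inter_iff, Set.mem_iInter,
      Finset.mem_range]
    constructor
    · rintro ⟨h1, h2⟩; exact ⟨h1, fun s hs => h2 s (by omega)⟩
    · rintro ⟨h1, h2⟩; exact ⟨h1, fun s hs => h2 s (by omega)⟩
  rw [h1]
  refine (aux_measSum μ Y hY (Finset.range m) j).inter ?_
  refine MeasurableSet.biInter (Finset.range (m + 1)).countable_toSet fun s _ => ?_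
  have h : Measurable fun ω => ∑ i ∈ Finset.range s, Y i ω :=
    Finset.measurable_sum _ fun l _ => hY.1 l
  exact h measurableSet_Iic

lemma aux_qzero (m j : ℕ) (h : m < j) : qv μ Y m j = 0 := by
  have he : Qset Y m j = ∅ := by
    ext ω
    simp only [Qset, Qpred, Set.mem_setOf_eq, Set.mem_empty_iff_false, iff_false, not_and]
    intro h1 h2
    have := h2 m le_rfl
    omega
  rw [qv, he, measure_empty, ENNReal.toReal_zero]

lemma aux_q00 : qv μ Y 0 0 = 1 := by
  have hu : Qset Y 0 0 = Set.univ := by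
    ext ω
    simp only [Qset, Qpred, Set.mem_setOf_eq, Set.mem_univ, iff_true, Finset.range_zero,
      Finset.sum_empty]
    refine ⟨trivial, fun s hs => ?_⟩
    interval_cases s
    simp
  rw [qv, hu, measure_univ, ENNReal.toReal_one]

lemma aux_qrec (hY : IsIID μ Y) (m j : ℕ) (hj : j ≤ m + 1) :
    qv μ Y (m + 1) j = ∑ y ∈ Finset.range (j + 1), qv μ Y m (j - y) * gainPMF μ Y y := by
  classical
  have hset : Qset Y (m + 1) j
      = ⋃ y ∈ Finset.range (j + 1), (Qset Y m (j - y) ∩ {ω | Y m ω = y}) := by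
    ext ω
    simp only [Qset, Qpred, Set.mem_setOf_eq, Set.mem_iUnion, Set.mem_inter_iff,
      Finset.mem_range]
    have hsucc : ∑ i ∈ Finset.range (m + 1), Y i ω
        = ∑ i ∈ Finset.range m, Y i ω + Y m ω := Finset.sum_range_succ _ _
    constructor
    · rintro ⟨h1, h2⟩
      refine ⟨Y m ω, by omega, ⟨by omega, fun s hs => h2 s (by omega)⟩, rfl⟩
    · rintro ⟨y, hy, ⟨h1, h2⟩, h3⟩
      constructor
      · omega
      · intro s hs
        rcases Nat.lt_or_ge s (m + 1) with h | h
        · exact h2 s (by omega)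
        · have hsm : s = m + 1 := by omega
          subst hsm
          omega
  rw [qv, hset, measure_biUnion_finset]
  · rw [ENNReal.toReal_sum fun a _ => measure_ne_top μ _]
    refine Finset.sum_congr rfl fun y _ => ?_
    rw [show Qset Y m (j - y) = {ω | Qpred m (j - y) fun i => Y i ω} from rfl,
      aux_split μ Y hY (Finset.range m) m Finset.notMem_range_self y (Qpred m (j - y))
        (aux_Qpred_congr m (j - y))]
    rw [ENNReal.toReal_mul]
    rfl
  · intro y _ y' _ hne
    refine Set.disjoint_left.mpr fun ω h h' => hne ?_
    rw [← h.2, ← h'.2]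
  · intro y _
    exact (aux_measQ μ Y hY m (j - y)).inter (aux_measYeq μ Y hY m y)

/-- decomposition of the recovery event. -/
lemma aux_recovery_decomp (hY : IsIID μ Y) (n k : ℕ) (hn : 1 ≤ n) :
    (μ (recoveryAt Y n k)).toReal
      = ∑ j ∈ Finset.range n, qv μ Y (n - 1) j * gainPMF μ Y (n + 1 + k - j) := by
  classical
  have hcast : ∀ (ω : Ω) (s : ℕ), (∑ i ∈ Finset.range s, (Y i ω : ℤ))
      = ((∑ i ∈ Finset.range s, Y i ω : ℕ) : ℤ) := fun ω s => by push_cast; rfl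
  have hset : recoveryAt Y n k
      = ⋃ j ∈ Finset.range n, (Qset Y (n - 1) j ∩ {ω | Y (n - 1) ω = n + 1 + k - j}) := by
    ext ω
    simp only [recoveryAt, reserve, Set.mem_setOf_eq, Set.mem_iUnion, Set.mem_inter_iff,
      Finset.mem_range, Qset, Qpred, hcast ω]
    have hsucc : ∑ i ∈ Finset.range n, Y i ω
        = ∑ i ∈ Finset.range (n - 1), Y i ω + Y (n - 1) ω := by
      have h1 : n = (n - 1) + 1 := by omega
      rw [h1, Finset.sum_range_succ]
      simp only [Nat.add_sub_cancel]
    constructor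
    · rintro ⟨h1, h2⟩
      have hSn : ∑ i ∈ Finset.range n, Y i ω = n + 1 + k := by omega
      have hlt : ∀ s < n, ∑ i ∈ Finset.range s, Y i ω ≤ s := by
        intro s hs
        have h3 := h2 s hs
        have h4 := hcast ω s
        omega
      refine ⟨∑ i ∈ Finset.range (n - 1), Y i ω, ?_, ⟨rfl, ?_⟩, ?_⟩
      · have := hlt (n - 1) (by omega); omega
      · intro s hs; exact hlt s (by omega)
      · omega
    · rintro ⟨j, hj, ⟨h1, h2⟩, h3⟩
      have hjn : j ≤ n - 1 := by
        have := h2 (n - 1) le_rfl; omega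
      have hSn : ∑ i ∈ Finset.range n, Y i ω = n + 1 + k := by omega
      constructor
      · omega
      · intro s hs
        have h4 := h2 s (by omega)
        have h5 := hcast ω s
        omega
  rw [hset, measure_biUnion_finset]
  · rw [ENNReal.toReal_sum fun a _ => measure_ne_top μ _]
    refine Finset.sum_congr rfl fun j _ => ?_
    rw [show Qset Y (n - 1) j = {ω | Qpred (n - 1) j fun i => Y i ω} from rfl,
      aux_split μ Y hY (Finset.range (n - 1)) (n - 1) Finset.notMem_range_self _
        (Qpred (n - 1) j) (aux_Qpred_congr (n - 1) j)]
    rw [ENNReal.toReal_mul]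
    rfl
  · intro j hj j' hj' hne
    refine Set.disjoint_left.mpr fun ω h h' => hne ?_
    rw [← h.1.1, ← h'.1.1]
  · intro j _
    exact (aux_measQ μ Y hY (n - 1) j).inter (aux_measYeq μ Y hY (n - 1) _)

end Aux3

section Aux4

set_option linter.unusedSectionVars false

variable (μ : Measure Ω) [IsProbabilityMeasure μ] (Y : ℕ → Ω → ℕ)

/-- the correction coefficient in the ballot-type formula. -/
def coefv (M i j : ℕ) : ℝ :=
  ((M - j : ℕ) : ℝ) / ((M - i : ℕ) : ℝ) * conv μ Y (M - i) (j - i) * conv μ Y (i - 1) i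

/-- the candidate formula for `qv`. -/
def fv (m j : ℕ) : ℝ :=
  conv μ Y m j - ∑ i ∈ Finset.Icc 2 j, coefv μ Y (m + 1) i j

lemma aux_conv_empty (c : ℕ) (hc : 0 < c) : conv μ Y 0 c = 0 := by
  have he : {ω : Ω | ∑ i ∈ Finset.range 0, Y i ω = c} = ∅ := by
    ext ω; simp; omega
  rw [conv, he, measure_empty, ENNReal.toReal_zero]

lemma aux_coefv_diag (M l : ℕ) : coefv μ Y M M l = 0 := by
  rw [coefv, Nat.sub_self, Nat.cast_zero, div_zero, zero_mul, zero_mul]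

lemma aux_coefv_top (M i : ℕ) : coefv μ Y M i M = 0 := by
  rw [coefv, Nat.sub_self, Nat.cast_zero, zero_div, zero_mul, zero_mul]

lemma aux_fv_top (m : ℕ) : fv μ Y m (m + 1) = conv μ Y m (m + 1) := by
  rw [fv, Finset.sum_eq_zero fun i _ => aux_coefv_top μ Y (m + 1) i, sub_zero]

lemma aux_tri_swap (j : ℕ) (F : ℕ → ℕ → ℝ) :
    ∑ y ∈ Finset.range (j + 1), ∑ i ∈ Finset.Icc 2 (j - y), F y i
      = ∑ i ∈ Finset.Icc 2 j, ∑ y ∈ Finset.range (j - i + 1), F y i := by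
  rw [Finset.sum_sigma', Finset.sum_sigma']
  refine Finset.sum_nbij' (fun q => ⟨q.2, q.1⟩) (fun q => ⟨q.2, q.1⟩) ?_ ?_ ?_ ?_ ?_
  · rintro ⟨y, i⟩ hq
    simp only [Finset.mem_sigma, Finset.mem_range, Finset.mem_Icc] at hq ⊢
    omega
  · rintro ⟨i, y⟩ hq
    simp only [Finset.mem_sigma, Finset.mem_range, Finset.mem_Icc] at hq ⊢
    omega
  · rintro ⟨y, i⟩ _; rfl
  · rintro ⟨i, y⟩ _; rfl
  · rintro ⟨y, i⟩ _; rfl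

lemma aux_inner_eval (hY : IsIID μ Y) (m i j : ℕ) (h2 : 2 ≤ i) (hij : i ≤ j)
    (hjm : j ≤ m + 1) (him : i ≤ m) :
    ∑ y ∈ Finset.range (j - i + 1), coefv μ Y (m + 1) i (j - y) * gainPMF μ Y y
      = coefv μ Y (m + 2) i j := by
  have hstep : ∀ y ∈ Finset.range (j - i + 1),
      coefv μ Y (m + 1) i (j - y) * gainPMF μ Y y
        = conv μ Y (i - 1) i / ((m + 1 - i : ℕ) : ℝ) *
            ((((m + 1 - j : ℕ) : ℝ) + (y : ℝ)) *
              (conv μ Y (m + 1 - i) ((j - i) - y) * gainPMF μ Y y)) := by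
    intro y hy
    have hy' : y ≤ j - i := by
      have := Finset.mem_range.mp hy; omega
    rw [coefv]
    have e1 : m + 1 - (j - y) = (m + 1 - j) + y := by omega
    have e2 : (j - y) - i = (j - i) - y := by omega
    rw [e1, e2]
    push_cast
    ring
  rw [Finset.sum_congr rfl hstep, ← Finset.mul_sum]
  have hsplit : ∑ y ∈ Finset.range (j - i + 1),
      ((((m + 1 - j : ℕ) : ℝ) + (y : ℝ)) *
        (conv μ Y (m + 1 - i) ((j - i) - y) * gainPMF μ Y y))
    = ((m + 1 - j : ℕ) : ℝ) *
        (∑ y ∈ Finset.range (j - i + 1), conv μ Y (m + 1 - i) ((j - i) - y) * gainPMF μ Y y)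
      + ∑ y ∈ Finset.range (j - i + 1),
          (y : ℝ) * gainPMF μ Y y * conv μ Y (m + 1 - i) ((j - i) - y) := by
    rw [Finset.mul_sum, ← Finset.sum_add_distrib]
    exact Finset.sum_congr rfl fun y _ => by ring
  rw [hsplit]
  have hconv : ∑ y ∈ Finset.range (j - i + 1),
      conv μ Y (m + 1 - i) ((j - i) - y) * gainPMF μ Y y = conv μ Y (m + 2 - i) (j - i) := by
    have h3 : m + 2 - i = (m + 1 - i) + 1 := by omega
    rw [h3, aux_convSucc μ Y hY (m + 1 - i) (j - i)]
  rw [hconv]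
  have hsb := aux_sizeBias μ Y hY (m + 1 - i) (j - i)
  rw [show (m + 1 - i) + 1 = m + 2 - i by omega] at hsb
  -- abbreviations
  set A : ℝ := ((m + 1 - j : ℕ) : ℝ) with hA
  set B : ℝ := ((m + 1 - i : ℕ) : ℝ) with hB
  set C : ℝ := conv μ Y (m + 2 - i) (j - i) with hC
  set D : ℝ := conv μ Y (i - 1) i with hD
  set S2 : ℝ := ∑ y ∈ Finset.range (j - i + 1),
      (y : ℝ) * gainPMF μ Y y * conv μ Y (m + 1 - i) ((j - i) - y) with hS2
  have hBne : B ≠ 0 := by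
    rw [hB]
    simp only [ne_eq, Nat.cast_eq_zero]
    omega
  have hB1ne : B + 1 ≠ 0 := by
    have : (0 : ℝ) ≤ B := by rw [hB]; positivity
    linarith
  have hji : ((j - i : ℕ) : ℝ) = B - A := by
    rw [hA, hB]
    have h4 : (j - i) + (m + 1 - j) = m + 1 - i := by omega
    have := congrArg (fun x : ℕ => (x : ℝ)) h4
    push_cast at this
    linarith
  have hsb' : (B + 1) * S2 = (B - A) * C := by
    rw [hji] at hsb
    exact hsb
  have hS2v : S2 = (B - A) * C / (B + 1) := by
    rw [eq_div_iff hB1ne]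
    linarith [hsb']
  rw [hS2v, coefv]
  have e3 : ((m + 2 - j : ℕ) : ℝ) = A + 1 := by
    rw [hA]
    have h5 : m + 2 - j = (m + 1 - j) + 1 := by omega
    rw [h5]; push_cast; ring
  have e4 : ((m + 2 - i : ℕ) : ℝ) = B + 1 := by
    rw [hB]
    have h5 : m + 2 - i = (m + 1 - i) + 1 := by omega
    rw [h5]; push_cast; ring
  rw [e3, e4, ← hC, ← hD]
  field_simp
  ring

lemma aux_AI (hY : IsIID μ Y) (m j : ℕ) (hj : j ≤ m + 1) :
    ∑ y ∈ Finset.range (j + 1), fv μ Y m (j - y) * gainPMF μ Y y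
      = conv μ Y (m + 1) j
        - ∑ i ∈ Finset.Icc 2 j, (if i ≤ m then coefv μ Y (m + 2) i j else 0) := by
  have hexp : ∀ y ∈ Finset.range (j + 1), fv μ Y m (j - y) * gainPMF μ Y y
      = conv μ Y m (j - y) * gainPMF μ Y y
        - ∑ i ∈ Finset.Icc 2 (j - y), coefv μ Y (m + 1) i (j - y) * gainPMF μ Y y := by
    intro y _
    rw [fv, sub_mul, Finset.sum_mul]
  rw [Finset.sum_congr rfl hexp, Finset.sum_sub_distrib, ← aux_convSucc μ Y hY m j]
  congr 1
  rw [aux_tri_swap j (fun y i => coefv μ Y (m + 1) i (j - y) * gainPMF μ Y y)]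
  refine Finset.sum_congr rfl fun i hi => ?_
  obtain ⟨h2i, hij⟩ := Finset.mem_Icc.mp hi
  by_cases him : i ≤ m
  · rw [if_pos him]
    exact aux_inner_eval μ Y hY m i j h2i hij hj him
  · rw [if_neg him]
    have hi1 : i = m + 1 := by omega
    subst hi1
    exact Finset.sum_eq_zero fun y _ => by
      rw [aux_coefv_diag μ Y (m + 1) (j - y), zero_mul]

lemma aux_claimC (hY : IsIID μ Y) : ∀ m j, j ≤ m → qv μ Y m j = fv μ Y m j := by
  intro m
  induction m with
  | zero =>
    intro j hj
    interval_cases j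
    rw [aux_q00 μ Y, fv]
    have : Finset.Icc 2 0 = (∅ : Finset ℕ) := by decide
    rw [this, Finset.sum_empty, sub_zero, aux_conv_zero μ Y]
  | succ m ih =>
    intro j hj
    rw [aux_qrec μ Y hY m j hj]
    rcases Nat.lt_or_ge j (m + 1) with hjm | hjm
    · have hjm' : j ≤ m := by omega
      rw [Finset.sum_congr rfl fun y hy =>
        (by rw [ih (j - y) (by omega)] :
          qv μ Y m (j - y) * gainPMF μ Y y = fv μ Y m (j - y) * gainPMF μ Y y)]
      rw [aux_AI μ Y hY m j hj, fv]
      congr 1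
      refine Finset.sum_congr rfl fun i hi => ?_
      rw [if_pos (by have := (Finset.mem_Icc.mp hi).2; omega)]
    · have hj1 : j = m + 1 := by omega
      subst hj1
      -- split off the `y = 0` term on both sides
      have hq0 : qv μ Y m (m + 1) = 0 := aux_qzero μ Y m (m + 1) (by omega)
      have hAI := aux_AI μ Y hY m (m + 1) le_rfl
      rw [Finset.sum_range_succ'] at hAI ⊢
      simp only [Nat.sub_zero] at hAI ⊢
      rw [hq0, zero_mul, add_zero]
      rw [aux_fv_top μ Y m] at hAI
      have hmain : ∑ y ∈ Finset.range (m + 1),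
          qv μ Y m (m + 1 - (y + 1)) * gainPMF μ Y (y + 1)
        = ∑ y ∈ Finset.range (m + 1),
            fv μ Y m (m + 1 - (y + 1)) * gainPMF μ Y (y + 1) :=
        Finset.sum_congr rfl fun y hy => by rw [ih (m + 1 - (y + 1)) (by omega)]
      rw [hmain]
      have hsum : ∑ y ∈ Finset.range (m + 1),
          fv μ Y m (m + 1 - (y + 1)) * gainPMF μ Y (y + 1)
        = conv μ Y (m + 1) (m + 1)
          - ∑ i ∈ Finset.Icc 2 (m + 1), (if i ≤ m then coefv μ Y (m + 2) i (m + 1) else 0)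
          - conv μ Y m (m + 1) * gainPMF μ Y 0 := by
        linarith [hAI]
      rw [hsum, fv]
      -- evaluate the ite sum
      have hite : ∑ i ∈ Finset.Icc 2 (m + 1), (if i ≤ m then coefv μ Y (m + 2) i (m + 1) else 0)
          = ∑ i ∈ Finset.Icc 2 (m + 1), coefv μ Y (m + 2) i (m + 1)
            - conv μ Y m (m + 1) * gainPMF μ Y 0 := by
        have hsplitite : ∀ i ∈ Finset.Icc 2 (m + 1),
            (if i ≤ m then coefv μ Y (m + 2) i (m + 1) else 0)
              = coefv μ Y (m + 2) i (m + 1)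
                - (if i = m + 1 then coefv μ Y (m + 2) i (m + 1) else 0) := by
          intro i hi
          obtain ⟨h2i, hile⟩ := Finset.mem_Icc.mp hi
          by_cases him : i ≤ m
          · rw [if_pos him, if_neg (by omega), sub_zero]
          · rw [if_neg him, if_pos (by omega)]; ring
        rw [Finset.sum_congr rfl hsplitite, Finset.sum_sub_distrib]
        congr 1
        rw [Finset.sum_ite_eq' (Finset.Icc 2 (m + 1)) (m + 1)
          (fun i => coefv μ Y (m + 2) i (m + 1))]
        rcases Nat.lt_or_ge m 1 with hm | hm
        · -- m = 0 : `m+1 ∉ Icc 2 (m+1)` and the coefficient vanishes anyway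
          have hm0 : m = 0 := by omega
          subst hm0
          rw [if_neg (by decide), aux_conv_empty μ Y 1 (by omega), zero_mul]
        · rw [if_pos (Finset.mem_Icc.mpr ⟨by omega, le_rfl⟩)]
          rw [coefv, show m + 2 - (m + 1) = 1 by omega, Nat.sub_self,
            show m + 1 - 1 = m by omega, aux_conv_one μ Y]
          norm_num
          ring
      rw [hite]
      simp only [show m + 1 + 1 = m + 2 from rfl]
      ring

end Aux4

/-- **Lemma 1 (joint law of recovery time and overshoot).** Starting from `R*_0 = -1`,
for `n ≥ 1` and `k ∈ ℕ`,
`P_{-1}(τ⁻ = n, R*_{τ⁻} = k)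
  = ∑_{j=0}^{n-1} p^{*(n-1)}_j p_{1+n-j+k}
    - ∑_{j=2}^{n-1} ∑_{i=2}^{j} ((n-j)/(n-i)) p^{*(n-i)}_{j-i} p^{*(i-1)}_i p_{1+n-j+k}`. -/
theorem recovery_joint_law
    (μ : Measure Ω) [IsProbabilityMeasure μ] (Y : ℕ → Ω → ℕ) (hY : IsIID μ Y)
    (n k : ℕ) (hn : 1 ≤ n) :
    (μ (recoveryAt Y n k)).toReal
      = (∑ j ∈ Finset.range n, conv μ Y (n - 1) j * gainPMF μ Y (1 + (n - j) + k))
        - ∑ j ∈ Finset.Icc 2 (n - 1), ∑ i ∈ Finset.Icc 2 j,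
            ((n - j : ℕ) : ℝ) / ((n - i : ℕ) : ℝ) * conv μ Y (n - i) (j - i)
              * conv μ Y (i - 1) i * gainPMF μ Y (1 + (n - j) + k) := by
  rw [aux_recovery_decomp μ Y hY n k hn]
  have h1 : ∀ j ∈ Finset.range n, qv μ Y (n - 1) j * gainPMF μ Y (n + 1 + k - j)
      = fv μ Y (n - 1) j * gainPMF μ Y (1 + (n - j) + k) := by
    intro j hj
    have hjn := Finset.mem_range.mp hj
    rw [aux_claimC μ Y hY (n - 1) j (by omega),
      show n + 1 + k - j = 1 + (n - j) + k by omega]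
  rw [Finset.sum_congr rfl h1]
  have h2 : ∀ j ∈ Finset.range n, fv μ Y (n - 1) j * gainPMF μ Y (1 + (n - j) + k)
      = conv μ Y (n - 1) j * gainPMF μ Y (1 + (n - j) + k)
        - (∑ i ∈ Finset.Icc 2 j, coefv μ Y n i j) * gainPMF μ Y (1 + (n - j) + k) := by
    intro j hj
    rw [fv, show n - 1 + 1 = n by omega, sub_mul]
  rw [Finset.sum_congr rfl h2, Finset.sum_sub_distrib]
  congr 1
  have hsub : Finset.Icc 2 (n - 1) ⊆ Finset.range n := fun j hj =>
    Finset.mem_range.mpr (by have := (Finset.mem_Icc.mp hj).2; omega)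
  have hzero : ∀ j ∈ Finset.range n, j ∉ Finset.Icc 2 (n - 1) →
      (∑ i ∈ Finset.Icc 2 j, coefv μ Y n i j) * gainPMF μ Y (1 + (n - j) + k) = 0 := by
    intro j hj hj2
    have hjn := Finset.mem_range.mp hj
    have hjlt : j < 2 := by
      by_contra hge
      exact hj2 (Finset.mem_Icc.mpr ⟨by omega, by omega⟩)
    rw [Finset.Icc_eq_empty (by omega), Finset.sum_empty, zero_mul]
  rw [← Finset.sum_subset hsub hzero]
  refine Finset.sum_congr rfl fun j hj => ?_
  rw [Finset.sum_mul]
  exact Finset.sum_congr rfl fun i hi => by rw [coefv]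
end
end

section
/- In the discrete-time dual risk model with delay r ∈ ℕ⁺ and initial capital u ∈ ℕ, for every horizon t > u + r + 1 the finite-time Parisian ruin probability satisfies ψ*_r(u,t) = ∑_{k=u}^{t−r−2} P_u(τ* = k) · ψ*_r(0, t−k). -/
open MeasureTheory ProbabilityTheory

noncomputable section

variable {Ω : Type*} [MeasurableSpace Ω]

section Aux

variable {μ : Measure Ω} {Y : ℕ → Ω → ℕ}


lemma meas_cylinder (hY : IsIID μ Y) {M : ℕ} {g : Fin M → ℕ}
    (hg : Function.Injective g) (y : Fin M → ℕ) :
    μ (⋂ i, Y (g i) ⁻¹' {y i}) = ∏ i : Fin M, μ {ω | Y 0 ω = y i} := by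
  classical
  have key := hY.2.1.measure_inter_preimage_eq_mul (Finset.univ.image g)
    (sets := fun j => {n | ∀ i, g i = j → n = y i})
    (fun j _ => (Set.to_countable _).measurableSet)
  have h1 : (⋂ j ∈ Finset.univ.image g, Y j ⁻¹' {n | ∀ i, g i = j → n = y i})
      = ⋂ i, Y (g i) ⁻¹' {y i} := by
    ext ω
    simp only [Set.mem_iInter, Finset.mem_image, Finset.mem_univ, true_and,
      Set.mem_preimage, Set.mem_setOf_eq, Set.mem_singleton_iff]
    constructor
    · intro h i
      exact h (g i) ⟨i, rfl⟩ i rfl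
    · rintro h j ⟨i, rfl⟩ i' hi'
      rw [← hg hi']; exact h i'
  have h2 : ∏ j ∈ Finset.univ.image g, μ (Y j ⁻¹' {n | ∀ i, g i = j → n = y i})
      = ∏ i : Fin M, μ {ω | Y 0 ω = y i} := by
    rw [Finset.prod_image (fun a _ b _ h => hg h)]
    refine Finset.prod_congr rfl (fun i _ => ?_)
    have hset : {n | ∀ i', g i' = g i → n = y i'} = {y i} := by
      ext n
      simp only [Set.mem_setOf_eq, Set.mem_singleton_iff]
      exact ⟨fun h => h i rfl, fun h i' hi' => by rw [h, hg hi']⟩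
    rw [hset, (hY.2.2 (g i)).measure_mem_eq (measurableSet_singleton _)]
    rfl
  rw [h1, h2] at key
  exact key

lemma meas_vec (hY : IsIID μ Y) {M : ℕ} {g : Fin M → ℕ}
    (hg : Function.Injective g) (S : Set (Fin M → ℕ)) :
    μ {ω | (fun i => Y (g i) ω) ∈ S}
      = ∑' y : S, ∏ i : Fin M, μ {ω | Y 0 ω = (y : Fin M → ℕ) i} := by
  classical
  have hE : {ω | (fun i => Y (g i) ω) ∈ S} = ⋃ y ∈ S, ⋂ i, Y (g i) ⁻¹' {y i} := by
    ext ω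
    simp only [Set.mem_setOf_eq, Set.mem_iUnion, Set.mem_iInter, Set.mem_preimage,
      Set.mem_singleton_iff]
    constructor
    · intro h; exact ⟨_, h, fun i => rfl⟩
    · rintro ⟨y, hy, h⟩
      have : (fun i => Y (g i) ω) = y := funext h
      rwa [this]
  rw [hE, measure_biUnion (S.to_countable) ?_ (fun y _ => MeasurableSet.iInter
      (fun i => (hY.1 (g i)) (measurableSet_singleton _)))]
  · exact tsum_congr (fun y => meas_cylinder hY hg y)
  · intro y1 hy1 y2 hy2 hne
    have : ∃ i, y1 i ≠ y2 i := by
      by_contra h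
      push_neg at h
      exact hne (funext h)
    obtain ⟨i, hi⟩ := this
    refine Set.disjoint_left.2 (fun ω h1 h2 => ?_)
    simp only [Set.mem_iInter, Set.mem_preimage, Set.mem_singleton_iff] at h1 h2
    exact hi ((h1 i).symm.trans (h2 i))

open scoped ENNReal

lemma meas_vec_shift (hY : IsIID μ Y) {M : ℕ} (k : ℕ) (S : Set (Fin M → ℕ)) :
    μ {ω | (fun i : Fin M => Y (k + i) ω) ∈ S} = μ {ω | (fun i : Fin M => Y i ω) ∈ S} := by
  rw [meas_vec hY (g := fun i : Fin M => k + (i : ℕ))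
      (fun x y h => Fin.val_injective (Nat.add_left_cancel h)) S,
    meas_vec hY (g := fun i : Fin M => (i : ℕ)) (fun x y h => Fin.val_injective h) S]

lemma meas_vec_prod (hY : IsIID μ Y) {a b : ℕ}
    (S1 : Set (Fin a → ℕ)) (S2 : Set (Fin b → ℕ)) :
    μ ({ω | (fun i : Fin a => Y i ω) ∈ S1} ∩ {ω | (fun j : Fin b => Y (a + j) ω) ∈ S2})
      = μ {ω | (fun i : Fin a => Y i ω) ∈ S1} * μ {ω | (fun j : Fin b => Y j ω) ∈ S2} := by
  classical
  set E : (Fin (a + b) → ℕ) ≃ (Fin a → ℕ) × (Fin b → ℕ) :=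
    (Equiv.arrowCongr finSumFinEquiv.symm (Equiv.refl ℕ)).trans
      (Equiv.sumArrowEquivProdArrow (Fin a) (Fin b) ℕ) with hE
  have hE1 : ∀ (z : Fin (a+b) → ℕ) (i : Fin a), (E z).1 i = z (Fin.castAdd b i) :=
    fun z i => rfl
  have hE2 : ∀ (z : Fin (a+b) → ℕ) (j : Fin b), (E z).2 j = z (Fin.natAdd a j) :=
    fun z j => rfl
  have hset : {ω | (fun i : Fin a => Y i ω) ∈ S1} ∩ {ω | (fun j : Fin b => Y (a + j) ω) ∈ S2}
      = {ω | (fun i : Fin (a+b) => Y i ω) ∈ E ⁻¹' (S1 ×ˢ S2)} := by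
    ext ω
    simp only [Set.mem_inter_iff, Set.mem_setOf_eq, Set.mem_preimage, Set.mem_prod]
    have c1 : (E (fun i : Fin (a+b) => Y i ω)).1 = fun i : Fin a => Y i ω := by
      funext i; rw [hE1]; simp
    have c2 : (E (fun i : Fin (a+b) => Y i ω)).2 = fun j : Fin b => Y (a + j) ω := by
      funext j; rw [hE2]; simp
    rw [c1, c2]
  rw [hset,
    meas_vec hY (g := fun i : Fin (a+b) => (i : ℕ)) (fun x y h => Fin.val_injective h),
    meas_vec hY (g := fun i : Fin a => (i : ℕ)) (fun x y h => Fin.val_injective h),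
    meas_vec hY (g := fun j : Fin b => (j : ℕ)) (fun x y h => Fin.val_injective h)]
  have hsplit : ∀ z : Fin (a+b) → ℕ, (∏ i : Fin (a+b), μ {ω | Y 0 ω = z i})
      = (∏ i : Fin a, μ {ω | Y 0 ω = (E z).1 i}) * ∏ j : Fin b, μ {ω | Y 0 ω = (E z).2 j} := by
    intro z
    rw [Fin.prod_univ_add (f := fun i => μ {ω | Y 0 ω = z i})]
    rfl
  rw [tsum_subtype (E ⁻¹' (S1 ×ˢ S2)) (fun z => ∏ i : Fin (a+b), μ {ω | Y 0 ω = z i}),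
    tsum_subtype S1 (fun y => ∏ i : Fin a, μ {ω | Y 0 ω = y i}),
    tsum_subtype S2 (fun y => ∏ j : Fin b, μ {ω | Y 0 ω = y j}),
    ← Equiv.tsum_eq E.symm ((E ⁻¹' (S1 ×ˢ S2)).indicator
      (fun z => ∏ i : Fin (a+b), μ {ω | Y 0 ω = z i}))]
  have hpt : ∀ w : (Fin a → ℕ) × (Fin b → ℕ),
      (E ⁻¹' (S1 ×ˢ S2)).indicator (fun z => ∏ i : Fin (a+b), μ {ω | Y 0 ω = z i}) (E.symm w)
        = (S1.indicator (fun y => ∏ i : Fin a, μ {ω | Y 0 ω = y i}) w.1)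
          * S2.indicator (fun y => ∏ j : Fin b, μ {ω | Y 0 ω = y j}) w.2 := by
    intro w
    have hmem : E.symm w ∈ E ⁻¹' (S1 ×ˢ S2) ↔ w.1 ∈ S1 ∧ w.2 ∈ S2 := by
      simp [Set.mem_preimage, Set.mem_prod]
    have hval : (∏ i : Fin (a+b), μ {ω | Y 0 ω = (E.symm w) i})
        = (∏ i : Fin a, μ {ω | Y 0 ω = w.1 i}) * ∏ j : Fin b, μ {ω | Y 0 ω = w.2 j} := by
      rw [hsplit (E.symm w), E.apply_symm_apply]
    by_cases h1 : w.1 ∈ S1 <;> by_cases h2 : w.2 ∈ S2 <;>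
      simp [Set.indicator_apply, hmem, h1, h2, hval]
  calc ∑' w : (Fin a → ℕ) × (Fin b → ℕ),
        (E ⁻¹' (S1 ×ˢ S2)).indicator (fun z => ∏ i : Fin (a+b), μ {ω | Y 0 ω = z i}) (E.symm w)
      = ∑' w : (Fin a → ℕ) × (Fin b → ℕ),
          (S1.indicator (fun y => ∏ i : Fin a, μ {ω | Y 0 ω = y i}) w.1)
            * S2.indicator (fun y => ∏ j : Fin b, μ {ω | Y 0 ω = y j}) w.2 :=
        tsum_congr hpt
    _ = (∑' y1 : Fin a → ℕ, S1.indicator (fun y => ∏ i : Fin a, μ {ω | Y 0 ω = y i}) y1)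
          * ∑' y2 : Fin b → ℕ, S2.indicator (fun y => ∏ j : Fin b, μ {ω | Y 0 ω = y j}) y2 := by
        rw [ENNReal.tsum_prod (f := fun y1 y2 =>
          (S1.indicator (fun y => ∏ i : Fin a, μ {ω | Y 0 ω = y i}) y1)
            * S2.indicator (fun y => ∏ j : Fin b, μ {ω | Y 0 ω = y j}) y2)]
        simp_rw [ENNReal.tsum_mul_left, ENNReal.tsum_mul_right]


lemma measSet_vec (hm : ∀ i, Measurable (Y i)) {M : ℕ} (g : Fin M → ℕ)
    (S : Set (Fin M → ℕ)) :
    MeasurableSet {ω | (fun i => Y (g i) ω) ∈ S} := by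
  classical
  have hE : {ω | (fun i => Y (g i) ω) ∈ S} = ⋃ y ∈ S, ⋂ i, Y (g i) ⁻¹' {y i} := by
    ext ω
    simp only [Set.mem_setOf_eq, Set.mem_iUnion, Set.mem_iInter, Set.mem_preimage,
      Set.mem_singleton_iff]
    constructor
    · intro h; exact ⟨_, h, fun i => rfl⟩
    · rintro ⟨y, hy, h⟩
      have : (fun i => Y (g i) ω) = y := funext h
      rwa [this]
  rw [hE]
  exact MeasurableSet.biUnion S.to_countable (fun y _ => MeasurableSet.iInter
    (fun i => (hm (g i)) (measurableSet_singleton _)))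

/-- finite-horizon reserve computed from a vector of gains -/
def fres {M : ℕ} (z : Fin M → ℕ) (u : ℤ) (m : ℕ) : ℤ :=
  u - m + ∑ i ∈ Finset.range m, (if h : i < M then (z ⟨i, h⟩ : ℤ) else 0)

lemma fres_apply {M : ℕ} (f : ℕ → ℕ) (u : ℤ) {m : ℕ} (h : m ≤ M) :
    fres (fun i : Fin M => f i) u m = u - m + ∑ i ∈ Finset.range m, (f i : ℤ) := by
  unfold fres
  congr 1
  refine Finset.sum_congr rfl (fun i hi => ?_)
  rw [Finset.mem_range] at hi
  rw [dif_pos (lt_of_lt_of_le hi h)]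

/-- vector version of the parisian-ruin-by event -/
def SB (r tt : ℕ) : Set (Fin (tt - 1) → ℕ) :=
  {z | ∃ s, (1 ≤ s ∧ fres z 0 (s-1) = 0 ∧ fres z 0 s = -1 ∧
    ∀ m, s ≤ m → m ≤ s + r → fres z 0 m < 0) ∧ s + r < tt}

/-- vector version of the dual-ruin-at event -/
def SD (u k : ℕ) : Set (Fin k → ℕ) :=
  {z | fres z (u : ℤ) k = 0 ∧ ∀ m < k, fres z (u : ℤ) m ≠ 0}

lemma eventB (W : ℕ → Ω → ℕ) (r tt : ℕ) :
    {ω | ∃ s, parisianWindow W 0 r s ω ∧ s + r < tt}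
      = {ω | (fun i : Fin (tt - 1) => W i ω) ∈ SB r tt} := by
  ext ω
  simp only [Set.mem_setOf_eq, SB, parisianWindow]
  have key : ∀ m : ℕ, m ≤ tt - 1 →
      fres (fun i : Fin (tt-1) => W i ω) 0 m = reserve W 0 m ω := by
    intro m hm
    rw [fres_apply (fun n => W n ω) 0 hm]
    rfl
  constructor
  · rintro ⟨s, ⟨h1, h2, h3, h4⟩, h5⟩
    refine ⟨s, ⟨h1, ?_, ?_, fun m hm1 hm2 => ?_⟩, h5⟩
    · rw [key (s-1) (by omega)]; exact h2
    · rw [key s (by omega)]; exact h3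
    · rw [key m (by omega)]; exact h4 m hm1 hm2
  · rintro ⟨s, ⟨h1, h2, h3, h4⟩, h5⟩
    refine ⟨s, ⟨h1, ?_, ?_, fun m hm1 hm2 => ?_⟩, h5⟩
    · rw [← key (s-1) (by omega)]; exact h2
    · rw [← key s (by omega)]; exact h3
    · rw [← key m (by omega)]; exact h4 m hm1 hm2

lemma eventD (u k : ℕ) :
    dualRuinAt Y (u : ℤ) k = {ω | (fun i : Fin k => Y i ω) ∈ SD u k} := by
  ext ω
  simp only [dualRuinAt, SD, Set.mem_setOf_eq]
  have key : ∀ m : ℕ, m ≤ k →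
      fres (fun i : Fin k => Y i ω) (u : ℤ) m = reserve Y (u : ℤ) m ω := by
    intro m hm
    rw [fres_apply (fun n => Y n ω) (u : ℤ) hm]
    rfl
  constructor
  · rintro ⟨h1, h2⟩
    exact ⟨by rw [key k le_rfl]; exact h1, fun m hm => by rw [key m (le_of_lt hm)]; exact h2 m hm⟩
  · rintro ⟨h1, h2⟩
    exact ⟨by rw [← key k le_rfl]; exact h1,
      fun m hm => by rw [← key m (le_of_lt hm)]; exact h2 m hm⟩

lemma reserve_add (u : ℤ) (k m : ℕ) (ω : Ω) :
    reserve Y u (k + m) ω = reserve Y u k ω + reserve (fun i => Y (k + i)) 0 m ω := by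
  simp only [reserve, Finset.sum_range_add]
  push_cast
  ring

lemma reserve_zero_le {u n : ℕ} {ω : Ω} (h : reserve Y (u : ℤ) n ω = 0) : u ≤ n := by
  have hS : (0:ℤ) ≤ ∑ i ∈ Finset.range n, (Y i ω : ℤ) :=
    Finset.sum_nonneg (fun i _ => Int.natCast_nonneg _)
  simp only [reserve] at h
  omega

lemma decomposition (μ : Measure Ω) (hY : IsIID μ Y) (u r t : ℕ) (hr : 1 ≤ r)
    (ht : u + r + 1 < t) :
    {ω | ∃ s, parisianWindow Y (u : ℤ) r s ω ∧ s + r < t}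
      = ⋃ k ∈ Finset.Icc u (t - r - 2), (dualRuinAt Y (u : ℤ) k ∩
          {ω | ∃ s, parisianWindow (fun i => Y (k + i)) 0 r s ω ∧ s + r < t - k}) := by
  classical
  ext ω
  simp only [Set.mem_setOf_eq, Set.mem_iUnion, Set.mem_inter_iff, Finset.mem_Icc,
    dualRuinAt, exists_prop]
  constructor
  · rintro ⟨s, hw, hst⟩
    obtain ⟨hs1, hs0, hsneg1, hneg⟩ := hw
    have hex : ∃ n, reserve Y (u:ℤ) n ω = 0 := ⟨s - 1, hs0⟩
    set k := Nat.find hex with hk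
    have hk0 : reserve Y (u:ℤ) k ω = 0 := Nat.find_spec hex
    have hmin : ∀ m < k, reserve Y (u:ℤ) m ω ≠ 0 := fun m hm => Nat.find_min hex hm
    have hks : k ≤ s - 1 := Nat.find_le hs0
    have hku : u ≤ k := reserve_zero_le hk0
    have hsh : ∀ m, reserve (fun i => Y (k + i)) 0 m ω = reserve Y (u:ℤ) (k + m) ω := by
      intro m
      have := reserve_add (Y := Y) (u:ℤ) k m ω
      rw [hk0] at this
      omega
    refine ⟨k, ⟨hku, by omega⟩, ⟨hk0, hmin⟩, s - k, ⟨by omega, ?_, ?_, ?_⟩, by omega⟩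
    · rw [hsh]
      have he : k + (s - k - 1) = s - 1 := by omega
      rw [he]; exact hs0
    · rw [hsh]
      have he : k + (s - k) = s := by omega
      rw [he]; exact hsneg1
    · intro m hm1 hm2
      rw [hsh]
      exact hneg (k + m) (by omega) (by omega)
  · rintro ⟨k, ⟨hku, hkK⟩, ⟨hk0, hmin⟩, s', ⟨hs1, hs0, hsneg1, hneg⟩, hst⟩
    have hsh : ∀ m, reserve (fun i => Y (k + i)) 0 m ω = reserve Y (u:ℤ) (k + m) ω := by
      intro m
      have := reserve_add (Y := Y) (u:ℤ) k m ω
      rw [hk0] at this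
      omega
    refine ⟨k + s', ⟨by omega, ?_, ?_, ?_⟩, by omega⟩
    · have he : k + s' - 1 = k + (s' - 1) := by omega
      rw [he, ← hsh]; exact hs0
    · rw [← hsh]; exact hsneg1
    · intro m hm1 hm2
      have he : m = k + (m - k) := by omega
      rw [he, ← hsh]
      exact hneg (m - k) (by omega) (by omega)


/-- **Theorem 1 (finite-time Parisian ruin recursion).** For `t > u + r + 1`,
`ψ*_r(u,t) = ∑_{k=u}^{t-r-2} P_u(τ* = k) ψ*_r(0, t-k)`. -/
theorem parisian_ruin_finite_time
    (μ : Measure Ω) [IsProbabilityMeasure μ] (Y : ℕ → Ω → ℕ) (hY : IsIID μ Y)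
    (u r t : ℕ) (hr : 1 ≤ r) (ht : u + r + 1 < t) :
    parisianRuinBy μ Y (u : ℤ) r t
      = ∑ k ∈ Finset.Icc u (t - r - 2),
          (μ (dualRuinAt Y (u : ℤ) k)).toReal * parisianRuinBy μ Y 0 r (t - k) := by
  classical
  have hm := hY.1
  set K := t - r - 2 with hK
  set D : ℕ → Set Ω := fun k => dualRuinAt Y (u : ℤ) k with hD
  set B : ℕ → Set Ω := fun k =>
    {ω | ∃ s, parisianWindow (fun i => Y (k + i)) 0 r s ω ∧ s + r < t - k} with hB
  have hBvec : ∀ k, B k = {ω | (fun j : Fin (t - k - 1) => Y (k + j) ω) ∈ SB r (t - k)} := by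
    intro k
    rw [hB]
    exact eventB (fun i => Y (k + i)) r (t - k)
  have hDvec : ∀ k, D k = {ω | (fun i : Fin k => Y i ω) ∈ SD u k} := fun k => eventD u k
  have hmeas : ∀ k, MeasurableSet (D k ∩ B k) := by
    intro k
    refine MeasurableSet.inter ?_ ?_
    · rw [hDvec k]
      exact measSet_vec hm (fun i : Fin k => (i : ℕ)) (SD u k)
    · rw [hBvec k]
      exact measSet_vec hm (fun j : Fin (t - k - 1) => k + (j : ℕ)) (SB r (t - k))
  have hdisj : (↑(Finset.Icc u K) : Set ℕ).PairwiseDisjoint (fun k => D k ∩ B k) := by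
    intro k1 _ k2 _ hne
    refine Set.disjoint_left.2 (fun ω h1 h2 => ?_)
    rcases lt_or_gt_of_ne hne with h | h
    · exact h2.1.2 k1 h h1.1.1
    · exact h1.1.2 k2 h h2.1.1
  have hsplit := decomposition (Y := Y) μ hY u r t hr ht
  have hsum : μ {ω | ∃ s, parisianWindow Y (u : ℤ) r s ω ∧ s + r < t}
      = ∑ k ∈ Finset.Icc u K, μ (D k ∩ B k) := by
    rw [hsplit]
    exact measure_biUnion_finset hdisj (fun k _ => hmeas k)
  have hterm : ∀ k ∈ Finset.Icc u K, μ (D k ∩ B k)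
      = μ (D k) * μ {ω | ∃ s, parisianWindow Y 0 r s ω ∧ s + r < t - k} := by
    intro k hk
    rw [hDvec k, hBvec k, meas_vec_prod hY (SD u k) (SB r (t - k)),
      ← hDvec k, ← eventB Y r (t - k)]
  calc parisianRuinBy μ Y (u : ℤ) r t
      = (∑ k ∈ Finset.Icc u K, μ (D k ∩ B k)).toReal := by
        rw [parisianRuinBy, hsum]
    _ = ∑ k ∈ Finset.Icc u K, (μ (D k ∩ B k)).toReal :=
        ENNReal.toReal_sum (fun k _ => measure_ne_top μ _)
    _ = ∑ k ∈ Finset.Icc u (t - r - 2),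
          (μ (dualRuinAt Y (u : ℤ) k)).toReal * parisianRuinBy μ Y 0 r (t - k) := by
        refine Finset.sum_congr rfl (fun k hk => ?_)
        rw [hterm k hk, ENNReal.toReal_mul, parisianRuinBy]
end Aux
end
end

section
/- In the discrete-time dual risk model with delay r ∈ ℕ⁺ and initial capital 0, the finite-time Parisian survival probability at horizon r + 2 equals φ*_r(0, r+2) = 1 − p_0 · φ(1, r+1), where φ(1, r+1) is the finite-time survival probability of the compound binomial risk process started at 1 over horizon r + 1. -/
open MeasureTheory ProbabilityTheory

noncomputable section

variable {Ω : Type*} [MeasurableSpace Ω]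

namespace Step1Aux

variable {Ω : Type*} [MeasurableSpace Ω]

/-- Extend a `Fin r`-tuple to `ℕ` by zero. -/
def ext' (r : ℕ) (x : Fin r → ℕ) (i : ℕ) : ℕ := if h : i < r then x ⟨i, h⟩ else 0

/-- The vector of gains `(Y_a, …, Y_{a+r-1})`. -/
def Vmap (Y : ℕ → Ω → ℕ) (r a : ℕ) (ω : Ω) : Fin r → ℕ := fun i => Y (a + i) ω

/-- The "survival" set of gain tuples. -/
def Sset (r : ℕ) : Set (Fin r → ℕ) :=
  {x | ∀ n ≤ r, ∑ i ∈ Finset.range n, ext' r x i ≤ n}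

lemma mem_Sset {r : ℕ} (Y : ℕ → Ω → ℕ) (a : ℕ) (ω : Ω) :
    Vmap Y r a ω ∈ Sset r ↔ ∀ n ≤ r, ∑ i ∈ Finset.range n, Y (a + i) ω ≤ n := by
  unfold Sset
  rw [Set.mem_setOf_eq]
  refine forall₂_congr fun n hn => ?_
  have h : ∑ i ∈ Finset.range n, ext' r (Vmap Y r a ω) i
      = ∑ i ∈ Finset.range n, Y (a + i) ω := by
    refine Finset.sum_congr rfl fun i hi => ?_
    have hir : i < r := lt_of_lt_of_le (Finset.mem_range.mp hi) hn
    simp [ext', Vmap, hir]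
  rw [h]

lemma preimage_singleton (Y : ℕ → Ω → ℕ) (r a : ℕ) (k : Fin r → ℕ) :
    Vmap Y r a ⁻¹' {k} = ⋂ i ∈ Finset.Ico a (a + r), Y i ⁻¹' {ext' r k (i - a)} := by
  ext ω
  simp only [Set.mem_preimage, Set.mem_singleton_iff, Set.mem_iInter, Finset.mem_Ico]
  constructor
  · rintro h i ⟨hai, hir⟩
    have hlt : i - a < r := by omega
    have h2 : Vmap Y r a ω ⟨i - a, hlt⟩ = k ⟨i - a, hlt⟩ := by rw [h]
    have h3 : a + (i - a) = i := by omega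
    simpa [Vmap, ext', hlt, h3] using h2
  · intro h
    funext j
    have h2 := h (a + j) ⟨Nat.le_add_right _ _, by omega⟩
    have h3 : a + (j : ℕ) - a = (j : ℕ) := by omega
    rw [h3] at h2
    simpa [Vmap, ext', j.isLt] using h2

lemma meas_preimage (Y : ℕ → Ω → ℕ) (hm : ∀ i, Measurable (Y i)) (r a : ℕ)
    (k : Fin r → ℕ) : MeasurableSet (Vmap Y r a ⁻¹' {k}) := by
  rw [preimage_singleton]
  exact Set.Finite.measurableSet_biInter (Finset.finite_toSet _)
    fun i _ => (hm i) (measurableSet_singleton _)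

lemma atom_measure (μ : Measure Ω) (Y : ℕ → Ω → ℕ) (hY : IsIID μ Y) (r a : ℕ)
    (k : Fin r → ℕ) :
    μ (Vmap Y r a ⁻¹' {k}) = ∏ j ∈ Finset.range r, μ (Y 0 ⁻¹' {ext' r k j}) := by
  rw [preimage_singleton]
  have h := hY.2.1.measure_inter_preimage_eq_mul (Finset.Ico a (a + r))
    (sets := fun i => ({ext' r k (i - a)} : Set ℕ)) (fun i _ => measurableSet_singleton _)
  rw [h, Finset.prod_Ico_eq_prod_range]
  simp only [Nat.add_sub_cancel_left, Nat.add_sub_cancel]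
  refine Finset.prod_congr rfl fun j _ => ?_
  exact (hY.2.2 (a + j)).measure_mem_eq (measurableSet_singleton _)

lemma atom_indep (μ : Measure Ω) (Y : ℕ → Ω → ℕ) (hY : IsIID μ Y) (r : ℕ)
    (k : Fin r → ℕ) :
    μ ((Y 0 ⁻¹' {0}) ∩ Vmap Y r 1 ⁻¹' {k})
      = μ (Y 0 ⁻¹' {0}) * μ (Vmap Y r 1 ⁻¹' {k}) := by
  classical
  set sets : ℕ → Set ℕ := fun i => if i = 0 then {0} else {ext' r k (i - 1)} with hsets
  have h0 : (0 : ℕ) ∉ Finset.Ico 1 (1 + r) := by simp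
  have hmain := hY.2.1.measure_inter_preimage_eq_mul (insert 0 (Finset.Ico 1 (1 + r)))
    (sets := sets) (fun i _ => by by_cases h : i = 0 <;> simp [hsets, h])
  have hinter : ⋂ i ∈ Finset.Ico 1 (1 + r), Y i ⁻¹' sets i = Vmap Y r 1 ⁻¹' {k} := by
    rw [preimage_singleton]
    refine Set.iInter₂_congr fun i hi => ?_
    have hne : i ≠ 0 := by have := Finset.mem_Ico.mp hi; omega
    simp [hsets, hne]
  have hprod : ∏ i ∈ Finset.Ico 1 (1 + r), μ (Y i ⁻¹' sets i)
      = μ (Vmap Y r 1 ⁻¹' {k}) := by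
    have h2 := hY.2.1.measure_inter_preimage_eq_mul (Finset.Ico 1 (1 + r))
      (sets := fun i => ({ext' r k (i - 1)} : Set ℕ)) (fun i _ => measurableSet_singleton _)
    rw [preimage_singleton, h2]
    refine Finset.prod_congr rfl fun i hi => ?_
    have hne : i ≠ 0 := by have := Finset.mem_Ico.mp hi; omega
    simp [hsets, hne]
  rw [Finset.set_biInter_insert, Finset.prod_insert h0, hinter, hprod] at hmain
  simpa [hsets] using hmain

lemma measure_A (μ : Measure Ω) (Y : ℕ → Ω → ℕ) (hY : IsIID μ Y) (r : ℕ) :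
    μ ((Y 0 ⁻¹' {0}) ∩ Vmap Y r 1 ⁻¹' Sset r)
      = μ (Y 0 ⁻¹' {0}) * μ (Vmap Y r 0 ⁻¹' Sset r) := by
  have cnt : (Sset r).Countable := Set.to_countable _
  have hU : (Y 0 ⁻¹' {0}) ∩ Vmap Y r 1 ⁻¹' Sset r
      = ⋃ k ∈ Sset r, (Y 0 ⁻¹' {0}) ∩ Vmap Y r 1 ⁻¹' {k} := by
    ext ω
    simp only [Set.mem_inter_iff, Set.mem_preimage, Set.mem_iUnion, Set.mem_singleton_iff]
    constructor
    · rintro ⟨h1, h2⟩; exact ⟨_, h2, h1, rfl⟩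
    · rintro ⟨k, hk, h1, h2⟩; exact ⟨h1, h2 ▸ hk⟩
  have hdisj : (Sset r).PairwiseDisjoint
      (fun k => (Y 0 ⁻¹' {0}) ∩ Vmap Y r 1 ⁻¹' {k}) := by
    intro a _ b _ hab
    refine Set.disjoint_left.mpr ?_
    rintro ω ⟨_, h1⟩ ⟨_, h2⟩
    exact hab (h1.symm.trans h2 : a = b)
  have hmeas : ∀ k ∈ Sset r,
      MeasurableSet ((Y 0 ⁻¹' {0}) ∩ Vmap Y r 1 ⁻¹' {k}) :=
    fun k _ => ((hY.1 0) (measurableSet_singleton _)).inter (meas_preimage Y hY.1 r 1 k)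
  rw [hU, measure_biUnion cnt hdisj hmeas]
  have hterm : ∀ k : Sset r,
      μ ((Y 0 ⁻¹' {0}) ∩ Vmap Y r 1 ⁻¹' {(k : Fin r → ℕ)})
        = μ (Y 0 ⁻¹' {0}) * μ (Vmap Y r 0 ⁻¹' {(k : Fin r → ℕ)}) := by
    intro k
    rw [atom_indep μ Y hY r k, atom_measure μ Y hY r 1 k, ← atom_measure μ Y hY r 0 k]
  rw [tsum_congr hterm, ENNReal.tsum_mul_left,
    tsum_measure_preimage_singleton cnt (fun y _ => meas_preimage Y hY.1 r 0 y)]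

lemma ruin_set_eq (Y : ℕ → Ω → ℕ) (r : ℕ) :
    {ω | ∃ s, parisianWindow Y 0 r s ω ∧ s + r < r + 2}
      = (Y 0 ⁻¹' {0}) ∩ Vmap Y r 1 ⁻¹' Sset r := by
  ext ω
  have hcast : ∀ n : ℕ, (∑ i ∈ Finset.range n, (Y (i + 1) ω : ℤ))
      = ((∑ i ∈ Finset.range n, Y (1 + i) ω : ℕ) : ℤ) := by
    intro n
    rw [Nat.cast_sum]
    exact Finset.sum_congr rfl fun i _ => by rw [Nat.add_comm]
  simp only [Set.mem_setOf_eq, Set.mem_inter_iff, Set.mem_preimage, Set.mem_singleton_iff,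
    mem_Sset]
  constructor
  · rintro ⟨s, ⟨hs1, _, hdown, hneg⟩, hlt⟩
    have hs : s = 1 := by omega
    subst hs
    have hY0 : Y 0 ω = 0 := by
      simp only [reserve, Finset.sum_range_one, Nat.cast_one] at hdown
      omega
    refine ⟨hY0, fun n hn => ?_⟩
    have h := hneg (n + 1) (by omega) (by omega)
    simp only [reserve] at h
    rw [Finset.sum_range_succ'] at h
    rw [hcast n, hY0] at h
    omega
  · rintro ⟨hY0, hsum⟩
    refine ⟨1, ⟨le_refl 1, by simp [reserve], ?_, ?_⟩, by omega⟩
    · simp only [reserve, Finset.sum_range_one, Nat.cast_one]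
      rw [hY0]
      simp
    · intro m hm1 hmr
      obtain ⟨n, rfl⟩ : ∃ n, m = n + 1 := ⟨m - 1, by omega⟩
      have h := hsum n (by omega)
      simp only [reserve]
      rw [Finset.sum_range_succ', hcast n, hY0]
      omega

lemma classical_set_eq (Y : ℕ → Ω → ℕ) (r : ℕ) :
    {ω | ∀ n < r + 1, 0 < ((1:ℕ) : ℤ) + n - ∑ i ∈ Finset.range n, (Y i ω : ℤ)}
      = Vmap Y r 0 ⁻¹' Sset r := by
  ext ω
  simp only [Set.mem_setOf_eq, Set.mem_preimage, mem_Sset, Nat.zero_add]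
  constructor
  · intro h n hn
    have h2 := h n (by omega)
    rw [← Nat.cast_sum] at h2
    omega
  · intro h n hn
    have h2 := h n (by omega)
    rw [← Nat.cast_sum]
    omega

end Step1Aux

/-- **Step 1.** The finite-time Parisian survival probability with zero initial reserve at
horizon `r + 2` satisfies `φ*_r(0, r+2) = 1 - p_0 φ(1, r+1)`. -/
theorem parisian_survival_step1
    (μ : Measure Ω) [IsProbabilityMeasure μ] (Y : ℕ → Ω → ℕ) (hY : IsIID μ Y)
    (r : ℕ) (hr : 1 ≤ r) :
    1 - parisianRuinBy μ Y 0 r (r + 2)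
      = 1 - gainPMF μ Y 0 * classicalSurvival μ Y 1 (r + 1) := by
  have h0 : {ω | Y 0 ω = 0} = Y 0 ⁻¹' {0} := rfl
  congr 1
  unfold parisianRuinBy gainPMF classicalSurvival
  rw [Step1Aux.ruin_set_eq Y r, Step1Aux.classical_set_eq Y r, h0,
    Step1Aux.measure_A μ Y hY r, ENNReal.toReal_mul]
end
end

section
/- In the discrete-time dual risk model with delay r ∈ ℕ⁺ and initial capital 0, the finite-time Parisian survival probability at horizon r + 3 equals φ*_r(0, r+3) = 1 − (1 + p_1) · p_0 · φ(1, r+1), where φ(1, r+1) is the finite-time survival probability of the compound binomial risk process started at 1 over horizon r + 1. -/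
open MeasureTheory ProbabilityTheory

noncomputable section

variable {Ω : Type*} [MeasurableSpace Ω]

namespace ParisianAux

/-- Extend a `Fin r`-tuple by zero. -/
def vvv (r : ℕ) (v : Fin r → ℕ) (i : ℕ) : ℕ := if h : i < r then v ⟨i, h⟩ else 0

/-- The set of survival paths of length `r`. -/
def QQ (r : ℕ) : Set (Fin r → ℕ) :=
  {v | ∀ n < r + 1, (∑ i ∈ Finset.range n, (vvv r v i : ℤ)) < 1 + n}

lemma prod_cylinder (μ : Measure Ω) (Y : ℕ → Ω → ℕ) (hY : IsIID μ Y) (m : ℕ) (c : ℕ → ℕ) :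
    μ {ω | ∀ j < m, Y j ω = c j} = ∏ j ∈ Finset.range m, μ {ω | Y 0 ω = c j} := by
  have h1 : {ω | ∀ j < m, Y j ω = c j} = ⋂ j ∈ Finset.range m, Y j ⁻¹' {c j} := by
    ext ω; simp
  rw [h1, hY.2.1.measure_inter_preimage_eq_mul (Finset.range m)
      (sets := fun j => {c j}) (fun i _ => measurableSet_singleton _)]
  refine Finset.prod_congr rfl fun j _ => ?_
  have h := (hY.2.2 j).measure_mem_eq (measurableSet_singleton (c j))
  simpa [Set.preimage, Set.mem_singleton_iff] using h

lemma key (μ : Measure Ω) (Y : ℕ → Ω → ℕ) (hY : IsIID μ Y) (r d : ℕ) (c : ℕ → ℕ) :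
    μ {ω | (∀ j < d, Y j ω = c j) ∧
        ∀ n < r + 1, (∑ i ∈ Finset.range n, (Y (i + d) ω : ℤ)) < 1 + n}
      = (∏ j ∈ Finset.range d, μ {ω | Y 0 ω = c j}) *
        ∑' q : QQ r, ∏ i ∈ Finset.range r, μ {ω | Y 0 ω = vvv r q i} := by
  classical
  set cc : (Fin r → ℕ) → ℕ → ℕ := fun q j => if j < d then c j else vvv r q (j - d) with hcc
  have hset : {ω | (∀ j < d, Y j ω = c j) ∧
        ∀ n < r + 1, (∑ i ∈ Finset.range n, (Y (i + d) ω : ℤ)) < 1 + n}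
      = ⋃ q : QQ r, {ω | ∀ j < d + r, Y j ω = cc q j} := by
    ext ω
    simp only [Set.mem_setOf_eq, Set.mem_iUnion]
    constructor
    · rintro ⟨hA, hE⟩
      refine ⟨⟨fun i => Y ((i : ℕ) + d) ω, ?_⟩, ?_⟩
      · intro n hn
        have hcong : ∀ i ∈ Finset.range n,
            ((vvv r (fun i : Fin r => Y ((i : ℕ) + d) ω) i : ℕ) : ℤ) = (Y (i + d) ω : ℤ) := by
          intro i hi
          have hi' : i < r := by
            have := Finset.mem_range.mp hi; omega
          simp [vvv, hi']
        rw [Finset.sum_congr rfl hcong]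
        exact hE n hn
      · intro j hj
        by_cases h : j < d
        · simp only [hcc, if_pos h]
          exact hA j h
        · have h1 : j - d < r := by omega
          have h2 : j - d + d = j := by omega
          simp only [hcc, if_neg h, vvv, dif_pos h1]
          exact congrArg (fun t => Y t ω) h2.symm
    · rintro ⟨⟨q, hq⟩, hω⟩
      constructor
      · intro j hj
        have h := hω j (by omega)
        simpa [hcc, hj] using h
      · intro n hn
        have hcong : ∀ i ∈ Finset.range n, (Y (i + d) ω : ℤ) = ((vvv r q i : ℕ) : ℤ) := by
          intro i hi
          have hi' : i < r := by
            have := Finset.mem_range.mp hi; omega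
          have h := hω (i + d) (by omega)
          have hd : ¬ (i + d < d) := by omega
          rw [hcc] at h
          simp only [if_neg hd, Nat.add_sub_cancel] at h
          exact_mod_cast congrArg (fun k : ℕ => (k : ℤ)) h
        rw [Finset.sum_congr rfl hcong]
        exact hq n hn
  rw [hset]
  have hmeas : ∀ q : QQ r, MeasurableSet {ω | ∀ j < d + r, Y j ω = cc q j} := by
    intro q
    have h : {ω | ∀ j < d + r, Y j ω = cc q j}
        = ⋂ j, ⋂ _ : j < d + r, Y j ⁻¹' {cc q j} := by
      ext ω; simp
    rw [h]
    exact MeasurableSet.iInter fun j => MeasurableSet.iInter fun _ =>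
      hY.1 j (measurableSet_singleton _)
  have hdisj : Pairwise (Function.onFun Disjoint
      fun q : QQ r => {ω | ∀ j < d + r, Y j ω = cc q j}) := by
    intro q q' hqq'
    rw [Function.onFun, Set.disjoint_left]
    intro ω h1 h2
    apply hqq'
    apply Subtype.ext
    funext i
    have e1 := h1 ((i : ℕ) + d) (by omega)
    have e2 := h2 ((i : ℕ) + d) (by omega)
    have hd : ¬ ((i : ℕ) + d < d) := by omega
    simp only [hcc, if_neg hd, Nat.add_sub_cancel, vvv, dif_pos i.isLt, Fin.eta] at e1 e2
    rw [← e1, ← e2]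
  rw [measure_iUnion hdisj hmeas]
  have hterm : ∀ q : QQ r, μ {ω | ∀ j < d + r, Y j ω = cc q j}
      = (∏ j ∈ Finset.range d, μ {ω | Y 0 ω = c j}) *
        ∏ i ∈ Finset.range r, μ {ω | Y 0 ω = vvv r q i} := by
    intro q
    rw [prod_cylinder μ Y hY (d + r) (cc q), Finset.prod_range_add]
    congr 1
    · refine Finset.prod_congr rfl fun j hj => ?_
      have := Finset.mem_range.mp hj
      simp [hcc, this]
    · refine Finset.prod_congr rfl fun i hi => ?_
      have hd : ¬ (d + i < d) := by omega
      simp [hcc, hd, Nat.add_sub_cancel_left]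
  calc ∑' q : QQ r, μ {ω | ∀ j < d + r, Y j ω = cc q j}
      = ∑' q : QQ r, (∏ j ∈ Finset.range d, μ {ω | Y 0 ω = c j}) *
          ∏ i ∈ Finset.range r, μ {ω | Y 0 ω = vvv r q i} := tsum_congr hterm
    _ = _ := ENNReal.tsum_mul_left

lemma measE (μ : Measure Ω) (Y : ℕ → Ω → ℕ) (hm : ∀ i, Measurable (Y i)) (r d : ℕ) (c : ℕ → ℕ) :
    MeasurableSet {ω | (∀ j < d, Y j ω = c j) ∧
      ∀ n < r + 1, (∑ i ∈ Finset.range n, (Y (i + d) ω : ℤ)) < 1 + n} := by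
  have h1 : {ω : Ω | (∀ j < d, Y j ω = c j) ∧
      ∀ n < r + 1, (∑ i ∈ Finset.range n, (Y (i + d) ω : ℤ)) < 1 + n}
      = (⋂ j, ⋂ _ : j < d, Y j ⁻¹' {c j}) ∩
        ⋂ n, ⋂ _ : n < r + 1, {ω | (∑ i ∈ Finset.range n, (Y (i + d) ω : ℤ)) < 1 + n} := by
    ext ω; simp
  rw [h1]
  refine (MeasurableSet.iInter fun j => MeasurableSet.iInter fun _ =>
      hm j (measurableSet_singleton _)).inter
    (MeasurableSet.iInter fun n => MeasurableSet.iInter fun _ => ?_)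
  have hS : Measurable fun ω => ∑ i ∈ Finset.range n, (Y (i + d) ω : ℤ) :=
    Finset.measurable_sum _ fun i _ => measurable_from_top.comp (hm (i + d))
  have h2 : {ω : Ω | (∑ i ∈ Finset.range n, (Y (i + d) ω : ℤ)) < 1 + n}
      = (fun ω => ∑ i ∈ Finset.range n, (Y (i + d) ω : ℤ)) ⁻¹' {x | x < 1 + n} := rfl
  rw [h2]
  exact hS (Set.to_countable _).measurableSet

end ParisianAux

/-- **Step 2.** The finite-time Parisian survival probability with zero initial reserve at
horizon `r + 3` satisfies `φ*_r(0, r+3) = 1 - (1 + p_1) p_0 φ(1, r+1)`. -/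
theorem parisian_survival_step2
    (μ : Measure Ω) [IsProbabilityMeasure μ] (Y : ℕ → Ω → ℕ) (hY : IsIID μ Y)
    (r : ℕ) (hr : 1 ≤ r) :
    1 - parisianRuinBy μ Y 0 r (r + 3)
      = 1 - (1 + gainPMF μ Y 1) * gainPMF μ Y 0 * classicalSurvival μ Y 1 (r + 1) := by
  classical
  -- the three instances of the key factorization lemma
  have hp0 : μ {ω | (∀ j < 0, Y j ω = 0) ∧
      ∀ n < r + 1, (∑ i ∈ Finset.range n, (Y (i + 0) ω : ℤ)) < 1 + n}
      = ∑' q : ParisianAux.QQ r, ∏ i ∈ Finset.range r,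
          μ {ω | Y 0 ω = ParisianAux.vvv r q i} := by
    have h := ParisianAux.key μ Y hY r 0 (fun _ => 0)
    simpa only [Finset.prod_range_zero, one_mul] using h
  have hp1 : μ {ω | (∀ j < 1, Y j ω = 0) ∧
      ∀ n < r + 1, (∑ i ∈ Finset.range n, (Y (i + 1) ω : ℤ)) < 1 + n}
      = μ {ω | Y 0 ω = 0} * ∑' q : ParisianAux.QQ r, ∏ i ∈ Finset.range r,
          μ {ω | Y 0 ω = ParisianAux.vvv r q i} := by
    have h := ParisianAux.key μ Y hY r 1 (fun _ => 0)
    simpa only [Finset.prod_range_one] using h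
  have hp2 : μ {ω | (∀ j < 2, Y j ω = 1 - j) ∧
      ∀ n < r + 1, (∑ i ∈ Finset.range n, (Y (i + 2) ω : ℤ)) < 1 + n}
      = μ {ω | Y 0 ω = 1} * μ {ω | Y 0 ω = 0} *
        ∑' q : ParisianAux.QQ r, ∏ i ∈ Finset.range r,
          μ {ω | Y 0 ω = ParisianAux.vvv r q i} := by
    have h := ParisianAux.key μ Y hY r 2 (fun j => 1 - j)
    simpa only [Finset.prod_range_succ, Finset.prod_range_zero, one_mul, Nat.sub_self,
      Nat.sub_zero] using h
  -- decomposition of the ruin event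
  have hsplit : {ω | ∃ s, parisianWindow Y 0 r s ω ∧ s + r < r + 3}
      = {ω | (∀ j < 1, Y j ω = 0) ∧
          ∀ n < r + 1, (∑ i ∈ Finset.range n, (Y (i + 1) ω : ℤ)) < 1 + n}
        ∪ {ω | (∀ j < 2, Y j ω = 1 - j) ∧
          ∀ n < r + 1, (∑ i ∈ Finset.range n, (Y (i + 2) ω : ℤ)) < 1 + n} := by
    ext ω
    simp only [Set.mem_setOf_eq, Set.mem_union]
    constructor
    · rintro ⟨s, ⟨hs1, hprev, hdown, hwin⟩, hst⟩
      have hs12 : s = 1 ∨ s = 2 := by omega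
      rcases hs12 with rfl | rfl
      · left
        have hY0 : (Y 0 ω : ℤ) = 0 := by
          have h := hdown
          simp only [reserve, Finset.sum_range_one] at h
          push_cast at h
          omega
        refine ⟨fun j hj => ?_, fun n hn => ?_⟩
        · interval_cases j
          exact_mod_cast hY0
        · have h := hwin (n + 1) (by omega) (by omega)
          simp only [reserve] at h
          rw [Finset.sum_range_succ'] at h
          push_cast at h ⊢
          omega
      · right
        have hY0 : (Y 0 ω : ℤ) = 1 := by
          have h := hprev
          rw [show (2 : ℕ) - 1 = 1 by norm_num] at h
          simp only [reserve, Finset.sum_range_one] at h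
          push_cast at h
          omega
        have hY1 : (Y 1 ω : ℤ) = 0 := by
          have h := hdown
          simp only [reserve] at h
          rw [show (2 : ℕ) = 1 + 1 by norm_num, Finset.sum_range_succ',
            Finset.sum_range_one] at h
          simp only [Nat.zero_add] at h
          push_cast at h
          omega
        refine ⟨fun j hj => ?_, fun n hn => ?_⟩
        · interval_cases j
          · omega
          · omega
        · have h := hwin (n + 2) (by omega) (by omega)
          simp only [reserve] at h
          rw [show n + 2 = (n + 1) + 1 by omega, Finset.sum_range_succ',
            Finset.sum_range_succ'] at h
          have hcong : ∑ i ∈ Finset.range n, (Y (i + 1 + 1) ω : ℤ)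
              = ∑ i ∈ Finset.range n, (Y (i + 2) ω : ℤ) :=
            Finset.sum_congr rfl fun i _ => by rw [show i + 1 + 1 = i + 2 by omega]
          rw [hcong] at h
          simp only [Nat.zero_add] at h
          push_cast at h ⊢
          omega
    · rintro (⟨hA, hE⟩ | ⟨hA, hE⟩)
      · have hY0 : Y 0 ω = 0 := hA 0 (by omega)
        refine ⟨1, ⟨le_refl 1, ?_, ?_, ?_⟩, by omega⟩
        · norm_num [reserve]
        · simp [reserve, Finset.sum_range_one, hY0]
        · intro m h1m hm1r
          obtain ⟨n, rfl⟩ : ∃ n, m = n + 1 := ⟨m - 1, by omega⟩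
          have h := hE n (by omega)
          simp only [reserve]
          rw [Finset.sum_range_succ']
          push_cast [hY0]
          omega
      · have hY0 : Y 0 ω = 1 := by have := hA 0 (by omega); omega
        have hY1 : Y 1 ω = 0 := by have := hA 1 (by omega); omega
        refine ⟨2, ⟨by omega, ?_, ?_, ?_⟩, by omega⟩
        · norm_num [reserve, Finset.sum_range_one, hY0]
        · simp only [reserve]
          rw [show (2 : ℕ) = 1 + 1 by norm_num, Finset.sum_range_succ',
            Finset.sum_range_one]
          simp only [Nat.zero_add]
          push_cast [hY0, hY1]
          try norm_num
        · intro m h2m hm2r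
          obtain ⟨n, rfl⟩ : ∃ n, m = n + 2 := ⟨m - 2, by omega⟩
          have h := hE n (by omega)
          simp only [reserve]
          rw [show n + 2 = (n + 1) + 1 by omega, Finset.sum_range_succ',
            Finset.sum_range_succ']
          have hcong : ∑ i ∈ Finset.range n, (Y (i + 1 + 1) ω : ℤ)
              = ∑ i ∈ Finset.range n, (Y (i + 2) ω : ℤ) :=
            Finset.sum_congr rfl fun i _ => by rw [show i + 1 + 1 = i + 2 by omega]
          rw [hcong]
          simp only [Nat.zero_add]
          push_cast [hY0, hY1]
          omega
  -- disjointness and measurability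
  have hdis : Disjoint
      {ω | (∀ j < 1, Y j ω = 0) ∧
          ∀ n < r + 1, (∑ i ∈ Finset.range n, (Y (i + 1) ω : ℤ)) < 1 + n}
      {ω | (∀ j < 2, Y j ω = 1 - j) ∧
          ∀ n < r + 1, (∑ i ∈ Finset.range n, (Y (i + 2) ω : ℤ)) < 1 + n} := by
    rw [Set.disjoint_left]
    rintro ω ⟨h1, -⟩ ⟨h2, -⟩
    have e1 := h1 0 (by omega)
    have e2 := h2 0 (by omega)
    omega
  have hB2m : MeasurableSet {ω | (∀ j < 2, Y j ω = 1 - j) ∧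
      ∀ n < r + 1, (∑ i ∈ Finset.range n, (Y (i + 2) ω : ℤ)) < 1 + n} :=
    ParisianAux.measE μ Y hY.1 r 2 (fun j => 1 - j)
  -- combine
  have hruin : μ {ω | ∃ s, parisianWindow Y 0 r s ω ∧ s + r < r + 3}
      = μ {ω | Y 0 ω = 0} * μ {ω | (∀ j < 0, Y j ω = 0) ∧
            ∀ n < r + 1, (∑ i ∈ Finset.range n, (Y (i + 0) ω : ℤ)) < 1 + n}
        + μ {ω | Y 0 ω = 1} * μ {ω | Y 0 ω = 0} * μ {ω | (∀ j < 0, Y j ω = 0) ∧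
            ∀ n < r + 1, (∑ i ∈ Finset.range n, (Y (i + 0) ω : ℤ)) < 1 + n} := by
    rw [hsplit, measure_union hdis hB2m, hp1, hp2, ← hp0]
  have hcs : classicalSurvival μ Y 1 (r + 1) = (μ {ω | (∀ j < 0, Y j ω = 0) ∧
      ∀ n < r + 1, (∑ i ∈ Finset.range n, (Y (i + 0) ω : ℤ)) < 1 + n}).toReal := by
    unfold classicalSurvival
    congr 1
    apply congrArg
    ext ω
    simp only [Set.mem_setOf_eq, Nat.not_lt_zero, false_implies, implies_true, true_and,
      Nat.add_zero, Nat.cast_one]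
    constructor <;> intro h n hn <;> have := h n hn <;> omega
  have hfin : ∀ s : Set Ω, μ s ≠ ⊤ := fun s => measure_ne_top μ s
  unfold parisianRuinBy gainPMF
  rw [hruin, hcs, ENNReal.toReal_add (ENNReal.mul_ne_top (hfin _) (hfin _))
      (ENNReal.mul_ne_top (ENNReal.mul_ne_top (hfin _) (hfin _)) (hfin _))]
  simp only [ENNReal.toReal_mul]
  ring
end
end

section
/- In the discrete-time dual risk model with delay r ∈ ℕ⁺ and initial capital 0, the finite-time Parisian survival probability at horizon r + 4 equals φ*_r(0, r+4) = 1 − [1 + 2·p_0·p_2 + p_1·(1 + p_1)] · p_0 · φ(1, r+1), where φ(1, r+1) is the finite-time survival probability of the compound binomial risk process started at 1 over horizon r + 1. -/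
open MeasureTheory ProbabilityTheory

noncomputable section

variable {Ω : Type*} [MeasurableSpace Ω]

namespace ParisianStep3

open Finset

def padz {N : ℕ} (c : Fin N → ℕ) : ℕ → ℕ := fun i => if h : i < N then c ⟨i, h⟩ else 0

def A0 (r : ℕ) : Set (Fin r → ℕ) := {d | ∀ n ≤ r, ∑ i ∈ Finset.range n, padz d i ≤ n}

def consSet {N : ℕ} (k : ℕ) (A : Set (Fin N → ℕ)) : Set (Fin (N + 1) → ℕ) :=
  {c | c 0 = k ∧ (fun i => c i.succ) ∈ A}

def V (Y : ℕ → Ω → ℕ) (a N : ℕ) (ω : Ω) : Fin N → ℕ := fun i => Y (a + i) ω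

lemma meas_all {N : ℕ} (A : Set (Fin N → ℕ)) : MeasurableSet A := by
  have : A = ⋃ x ∈ A, {x} := by simp
  rw [this]
  exact MeasurableSet.biUnion (Set.to_countable A) fun x _ => measurableSet_singleton x

lemma measurable_V {Y : ℕ → Ω → ℕ} (hm : ∀ i, Measurable (Y i)) (a N : ℕ) :
    Measurable (V Y a N) :=
  measurable_pi_lambda _ fun _ => hm _

variable {μ : Measure Ω} [IsProbabilityMeasure μ] {Y : ℕ → Ω → ℕ}

lemma atom (hm : ∀ i, Measurable (Y i))
    (hind : iIndepFun Y μ)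
    (hid : ∀ i, IdentDistrib (Y i) (Y 0) μ μ) (a N : ℕ) (c : Fin N → ℕ) :
    μ (⋂ i : Fin N, Y (a + i) ⁻¹' {c i}) = ∏ i : Fin N, (μ.map (Y 0)) {c i} := by
  classical
  set g : ℕ → Set ℕ := fun j => {k | ∀ i : Fin N, a + (i : ℕ) = j → k = c i} with hg
  have hginj : ∀ i : Fin N, g (a + (i : ℕ)) = {c i} := by
    intro i
    ext k
    simp only [hg, Set.mem_setOf_eq, Set.mem_singleton_iff]
    constructor
    · intro h; exact h i rfl
    · intro h i' hi'
      have : i' = i := Fin.ext (by omega)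
      subst this; exact h
  have hset : (⋂ j ∈ Finset.image (fun i : Fin N => a + (i : ℕ)) Finset.univ, Y j ⁻¹' g j)
      = ⋂ i : Fin N, Y (a + i) ⁻¹' {c i} := by
    ext ω
    simp only [Set.mem_iInter, Finset.mem_image, Finset.mem_univ, true_and,
      Set.mem_preimage, Set.mem_singleton_iff]
    constructor
    · intro h i
      have := h (a + (i : ℕ)) ⟨i, rfl⟩
      rw [hginj i] at this
      exact this
    · rintro h j ⟨i, rfl⟩
      rw [hginj i]
      exact h i
  rw [← hset, hind.meas_biInter (fun j _ => ⟨g j, MeasurableSet.of_discrete, rfl⟩)]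
  rw [Finset.prod_image (by intro x _ y _ h; exact Fin.ext (by simp only at h; omega))]
  refine Finset.prod_congr rfl fun i _ => ?_
  rw [hginj i, ← Measure.map_apply (hm _) MeasurableSet.of_discrete, (hid (a + i)).map_eq]

lemma map_V (hm : ∀ i, Measurable (Y i))
    (hind : iIndepFun Y μ)
    (hid : ∀ i, IdentDistrib (Y i) (Y 0) μ μ) (a N : ℕ) :
    μ.map (V Y a N) = Measure.pi (fun _ : Fin N => μ.map (Y 0)) := by
  haveI : IsProbabilityMeasure (μ.map (Y 0)) :=
    Measure.isProbabilityMeasure_map (hm 0).aemeasurable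
  refine Measure.ext_of_singleton fun c => ?_
  rw [Measure.map_apply (measurable_V hm a N) (measurableSet_singleton _)]
  have hpre : V Y a N ⁻¹' {c} = ⋂ i : Fin N, Y (a + i) ⁻¹' {c i} := by
    ext ω
    simp [V, funext_iff, Set.mem_iInter]
  rw [hpre, atom hm hind hid a N c, ← Set.univ_pi_singleton c, Measure.pi_pi]

lemma measure_preimage_V (hm : ∀ i, Measurable (Y i))
    (hind : iIndepFun Y μ)
    (hid : ∀ i, IdentDistrib (Y i) (Y 0) μ μ) (a N : ℕ) (A : Set (Fin N → ℕ)) :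
    μ (V Y a N ⁻¹' A) = Measure.pi (fun _ : Fin N => μ.map (Y 0)) A := by
  rw [← map_V hm hind hid a N, Measure.map_apply (measurable_V hm a N) (meas_all A)]

lemma peel (ν : Measure ℕ) [IsProbabilityMeasure ν] (N k : ℕ) (A : Set (Fin N → ℕ)) :
    Measure.pi (fun _ : Fin (N + 1) => ν) (consSet k A)
      = ν {k} * Measure.pi (fun _ : Fin N => ν) A := by
  have h := measurePreserving_piFinSuccAbove (fun _ : Fin (N + 1) => ν) 0
  have hs : consSet k A
      = (MeasurableEquiv.piFinSuccAbove (fun _ : Fin (N + 1) => ℕ) 0) ⁻¹' ({k} ×ˢ A) := by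
    ext c
    simp [consSet, MeasurableEquiv.piFinSuccAbove, Fin.removeNth, Fin.succAbove, Fin.tail,
      eq_comm, and_comm]
    intro _
    exact Iff.rfl
  rw [hs, h.measure_preimage (((measurableSet_singleton k).prod (meas_all A)).nullMeasurableSet),
    Measure.prod_prod]

lemma prepend (hm : ∀ i, Measurable (Y i))
    (hind : iIndepFun Y μ)
    (hid : ∀ i, IdentDistrib (Y i) (Y 0) μ μ) (a N k : ℕ) (A : Set (Fin N → ℕ)) :
    μ (V Y a (N + 1) ⁻¹' consSet k A) = (μ.map (Y 0)) {k} * μ (V Y 0 N ⁻¹' A) := by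
  haveI : IsProbabilityMeasure (μ.map (Y 0)) :=
    Measure.isProbabilityMeasure_map (hm 0).aemeasurable
  rw [measure_preimage_V hm hind hid, measure_preimage_V hm hind hid, peel]

lemma V_tail {Y : ℕ → Ω → ℕ} (a N : ℕ) (ω : Ω) :
    (fun i : Fin N => V Y a (N + 1) ω i.succ) = V Y (a + 1) N ω := by
  funext i
  simp only [V, Fin.val_succ]
  congr 1
  omega

lemma mem_consSet_iff {Y : ℕ → Ω → ℕ} (a N k : ℕ) (A : Set (Fin N → ℕ)) (ω : Ω) :
    V Y a (N + 1) ω ∈ consSet k A ↔ Y a ω = k ∧ V Y (a + 1) N ω ∈ A := by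
  unfold consSet
  rw [Set.mem_setOf_eq, V_tail]
  simp [V]

lemma mem_A0_iff {Y : ℕ → Ω → ℕ} (a r : ℕ) (ω : Ω) :
    V Y a r ω ∈ A0 r ↔ ∀ n ≤ r, ∑ i ∈ Finset.range n, Y (a + i) ω ≤ n := by
  unfold A0
  rw [Set.mem_setOf_eq]
  refine forall₂_congr fun n hn => ?_
  have hc : ∀ i ∈ Finset.range n, padz (V Y a r ω) i = Y (a + i) ω := by
    intro i hi
    rw [Finset.mem_range] at hi
    have hir : i < r := lt_of_lt_of_le hi hn
    simp [padz, hir, V]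
  rw [Finset.sum_congr rfl hc]

lemma memP1_iff {Y : ℕ → Ω → ℕ} (r : ℕ) (ω : Ω) :
    ω ∈ V Y 0 (r + 1) ⁻¹' consSet 0 (A0 r) ↔
      (Y 0 ω = 0 ∧ ∀ n ≤ r, ∑ i ∈ Finset.range n, Y (1 + i) ω ≤ n) := by
  rw [Set.mem_preimage, mem_consSet_iff, mem_A0_iff]

lemma memP2_iff {Y : ℕ → Ω → ℕ} (r : ℕ) (ω : Ω) :
    ω ∈ V Y 0 (r + 1 + 1) ⁻¹' consSet 1 (consSet 0 (A0 r)) ↔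
      (Y 0 ω = 1 ∧ Y 1 ω = 0 ∧ ∀ n ≤ r, ∑ i ∈ Finset.range n, Y (2 + i) ω ≤ n) := by
  rw [Set.mem_preimage, mem_consSet_iff, mem_consSet_iff, mem_A0_iff]

lemma memP3_iff {Y : ℕ → Ω → ℕ} (r k0 k1 : ℕ) (ω : Ω) :
    ω ∈ V Y 0 (r + 1 + 1 + 1) ⁻¹' consSet k0 (consSet k1 (consSet 0 (A0 r))) ↔
      (Y 0 ω = k0 ∧ Y 1 ω = k1 ∧ Y 2 ω = 0 ∧
        ∀ n ≤ r, ∑ i ∈ Finset.range n, Y (3 + i) ω ≤ n) := by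
  rw [Set.mem_preimage, mem_consSet_iff, mem_consSet_iff, mem_consSet_iff, mem_A0_iff]

lemma event_decomp (Y : ℕ → Ω → ℕ) (r : ℕ) (hr : 1 ≤ r) :
    {ω | ∃ s, parisianWindow Y 0 r s ω ∧ s + r < r + 4}
      = (V Y 0 (r + 1) ⁻¹' consSet 0 (A0 r)) ∪
        ((V Y 0 (r + 1 + 1) ⁻¹' consSet 1 (consSet 0 (A0 r))) ∪
         ((V Y 0 (r + 1 + 1 + 1) ⁻¹' consSet 0 (consSet 2 (consSet 0 (A0 r)))) ∪
          ((V Y 0 (r + 1 + 1 + 1) ⁻¹' consSet 1 (consSet 1 (consSet 0 (A0 r)))) ∪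
           (V Y 0 (r + 1 + 1 + 1) ⁻¹' consSet 2 (consSet 0 (consSet 0 (A0 r))))))) := by
  ext ω
  simp only [Set.mem_setOf_eq, Set.mem_union, memP1_iff, memP2_iff, memP3_iff]
  constructor
  · rintro ⟨s, ⟨hs1, h0, h1, hneg⟩, hlt⟩
    have hs3 : s = 1 ∨ s = 2 ∨ s = 3 := by omega
    rcases hs3 with rfl | rfl | rfl
    · -- s = 1
      have hY0 : Y 0 ω = 0 := by
        simp only [reserve, Finset.sum_range_succ, Finset.sum_range_zero] at h1
        omega
      left
      refine ⟨hY0, fun n hn => ?_⟩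
      have h := hneg (1 + n) (by omega) (by omega)
      simp only [reserve] at h
      rw [← Nat.cast_sum, Finset.sum_range_add] at h
      simp only [Finset.sum_range_succ, Finset.sum_range_zero, hY0] at h
      omega
    · -- s = 2
      have hY0 : Y 0 ω = 1 := by
        norm_num [reserve, Finset.sum_range_succ, Finset.sum_range_zero] at h0
        omega
      have hY1 : Y 1 ω = 0 := by
        simp only [reserve, Finset.sum_range_succ, Finset.sum_range_zero] at h1
        omega
      right; left
      refine ⟨hY0, hY1, fun n hn => ?_⟩
      have h := hneg (2 + n) (by omega) (by omega)
      simp only [reserve] at h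
      rw [← Nat.cast_sum, Finset.sum_range_add] at h
      simp only [Finset.sum_range_succ, Finset.sum_range_zero, hY0, hY1] at h
      omega
    · -- s = 3
      have h01 : Y 0 ω + Y 1 ω = 2 := by
        norm_num [reserve, Finset.sum_range_succ, Finset.sum_range_zero] at h0
        omega
      have hY2 : Y 2 ω = 0 := by
        simp only [reserve, Finset.sum_range_succ, Finset.sum_range_zero] at h1
        omega
      have htail : ∀ n ≤ r, ∑ i ∈ Finset.range n, Y (3 + i) ω ≤ n := by
        intro n hn
        have h := hneg (3 + n) (by omega) (by omega)
        simp only [reserve] at h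
        rw [← Nat.cast_sum, Finset.sum_range_add] at h
        simp only [Finset.sum_range_succ, Finset.sum_range_zero] at h
        omega
      have hcases : (Y 0 ω = 0 ∧ Y 1 ω = 2) ∨ (Y 0 ω = 1 ∧ Y 1 ω = 1) ∨
          (Y 0 ω = 2 ∧ Y 1 ω = 0) := by omega
      rcases hcases with ⟨ha, hb⟩ | ⟨ha, hb⟩ | ⟨ha, hb⟩
      · right; right; left; exact ⟨ha, hb, hY2, htail⟩
      · right; right; right; left; exact ⟨ha, hb, hY2, htail⟩
      · right; right; right; right; exact ⟨ha, hb, hY2, htail⟩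
  · rintro (⟨hY0, htail⟩ | ⟨hY0, hY1, htail⟩ | ⟨hY0, hY1, hY2, htail⟩ |
      ⟨hY0, hY1, hY2, htail⟩ | ⟨hY0, hY1, hY2, htail⟩)
    · refine ⟨1, ⟨le_refl 1, ?_, ?_, ?_⟩, by omega⟩
      · simp [reserve]
      · simp only [reserve, Finset.sum_range_succ, Finset.sum_range_zero, hY0]
        norm_num
      · intro m h1m hm
        obtain ⟨n, rfl⟩ : ∃ n, m = 1 + n := ⟨m - 1, by omega⟩
        have ht := htail n (by omega)
        simp only [reserve]
        rw [← Nat.cast_sum, Finset.sum_range_add]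
        simp only [Finset.sum_range_succ, Finset.sum_range_zero, hY0]
        omega
    · refine ⟨2, ⟨by norm_num, ?_, ?_, ?_⟩, by omega⟩
      · norm_num [reserve, Finset.sum_range_succ, Finset.sum_range_zero, hY0]
      · simp only [reserve, Finset.sum_range_succ, Finset.sum_range_zero, hY0, hY1]
        norm_num
      · intro m h1m hm
        obtain ⟨n, rfl⟩ : ∃ n, m = 2 + n := ⟨m - 2, by omega⟩
        have ht := htail n (by omega)
        simp only [reserve]
        rw [← Nat.cast_sum, Finset.sum_range_add, Finset.sum_range_succ,
          Finset.sum_range_succ, Finset.sum_range_zero, hY0, hY1]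
        omega
    all_goals {
      refine ⟨3, ⟨by norm_num, ?_, ?_, ?_⟩, by omega⟩
      · norm_num [reserve, Finset.sum_range_succ, Finset.sum_range_zero, hY0, hY1]
      · simp only [reserve, Finset.sum_range_succ, Finset.sum_range_zero, hY0, hY1, hY2]
        norm_num
      · intro m h1m hm
        obtain ⟨n, rfl⟩ : ∃ n, m = 3 + n := ⟨m - 3, by omega⟩
        have ht := htail n (by omega)
        simp only [reserve]
        rw [← Nat.cast_sum, Finset.sum_range_add]
        simp only [Finset.sum_range_succ, Finset.sum_range_zero, hY0, hY1, hY2]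
        omega }
end ParisianStep3

open ParisianStep3

/-- **Step 3.** The finite-time Parisian survival probability with zero initial reserve at
horizon `r + 4` satisfies `φ*_r(0, r+4) = 1 - [1 + 2 p_0 p_2 + p_1 (1 + p_1)] p_0 φ(1, r+1)`. -/
theorem parisian_survival_step3
    (μ : Measure Ω) [IsProbabilityMeasure μ] (Y : ℕ → Ω → ℕ) (hY : IsIID μ Y)
    (r : ℕ) (hr : 1 ≤ r) :
    1 - parisianRuinBy μ Y 0 r (r + 4)
      = 1 - (1 + 2 * gainPMF μ Y 0 * gainPMF μ Y 2
              + gainPMF μ Y 1 * (1 + gainPMF μ Y 1))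
            * gainPMF μ Y 0 * classicalSurvival μ Y 1 (r + 1) := by
  obtain ⟨hm, hind, hid⟩ := hY
  haveI : IsProbabilityMeasure (μ.map (Y 0)) :=
    Measure.isProbabilityMeasure_map (hm 0).aemeasurable
  set ν := μ.map (Y 0) with hν
  congr 1
  have hpk : ∀ k, gainPMF μ Y k = (ν {k}).toReal := by
    intro k
    unfold gainPMF
    rw [hν, Measure.map_apply (hm 0) (measurableSet_singleton k)]
    rfl
  set Φ := μ (V Y 0 r ⁻¹' A0 r) with hΦ
  have hφ : classicalSurvival μ Y 1 (r + 1) = Φ.toReal := by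
    unfold classicalSurvival
    have hsets : {ω : Ω | ∀ n < r + 1,
        0 < ((1 : ℕ) : ℤ) + n - ∑ i ∈ Finset.range n, (Y i ω : ℤ)}
        = V Y 0 r ⁻¹' A0 r := by
      ext ω
      rw [Set.mem_preimage, mem_A0_iff, Set.mem_setOf_eq]
      have hco : ∀ n, ∑ i ∈ Finset.range n, Y (0 + i) ω = ∑ i ∈ Finset.range n, Y i ω :=
        fun n => Finset.sum_congr rfl fun i _ => by rw [Nat.zero_add]
      constructor
      · intro h n hn
        have h' := h n (by omega)
        rw [← Nat.cast_sum] at h'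
        rw [hco]
        omega
      · intro h n hn
        have h' := h n (by omega)
        rw [hco] at h'
        rw [← Nat.cast_sum]
        omega
    rw [hsets, hΦ]
  -- the five pieces
  set P1 : Set Ω := V Y 0 (r + 1) ⁻¹' consSet 0 (A0 r) with hP1def
  set P2 : Set Ω := V Y 0 (r + 1 + 1) ⁻¹' consSet 1 (consSet 0 (A0 r)) with hP2def
  set P3a : Set Ω := V Y 0 (r + 1 + 1 + 1) ⁻¹' consSet 0 (consSet 2 (consSet 0 (A0 r)))
    with hP3adef
  set P3b : Set Ω := V Y 0 (r + 1 + 1 + 1) ⁻¹' consSet 1 (consSet 1 (consSet 0 (A0 r)))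
    with hP3bdef
  set P3c : Set Ω := V Y 0 (r + 1 + 1 + 1) ⁻¹' consSet 2 (consSet 0 (consSet 0 (A0 r)))
    with hP3cdef
  have hMP : ∀ (N : ℕ) (A : Set (Fin N → ℕ)), MeasurableSet (V Y 0 N ⁻¹' A) :=
    fun N A => (measurable_V hm 0 N) (meas_all A)
  -- disjointness
  have d12 : Disjoint P1 P2 := by
    rw [Set.disjoint_left]
    intro ω h1 h2
    rw [hP1def, memP1_iff] at h1
    rw [hP2def, memP2_iff] at h2
    omega
  have d13a : Disjoint P1 P3a := by
    rw [Set.disjoint_left]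
    intro ω h1 h2
    rw [hP1def, memP1_iff] at h1
    rw [hP3adef, memP3_iff] at h2
    have := h1.2 1 hr
    rw [Finset.sum_range_one] at this
    norm_num at this
    omega
  have d13b : Disjoint P1 P3b := by
    rw [Set.disjoint_left]
    intro ω h1 h2
    rw [hP1def, memP1_iff] at h1
    rw [hP3bdef, memP3_iff] at h2
    omega
  have d13c : Disjoint P1 P3c := by
    rw [Set.disjoint_left]
    intro ω h1 h2
    rw [hP1def, memP1_iff] at h1
    rw [hP3cdef, memP3_iff] at h2
    omega
  have d23a : Disjoint P2 P3a := by
    rw [Set.disjoint_left]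
    intro ω h1 h2
    rw [hP2def, memP2_iff] at h1
    rw [hP3adef, memP3_iff] at h2
    omega
  have d23b : Disjoint P2 P3b := by
    rw [Set.disjoint_left]
    intro ω h1 h2
    rw [hP2def, memP2_iff] at h1
    rw [hP3bdef, memP3_iff] at h2
    omega
  have d23c : Disjoint P2 P3c := by
    rw [Set.disjoint_left]
    intro ω h1 h2
    rw [hP2def, memP2_iff] at h1
    rw [hP3cdef, memP3_iff] at h2
    omega
  have d3ab : Disjoint P3a P3b := by
    rw [Set.disjoint_left]
    intro ω h1 h2
    rw [hP3adef, memP3_iff] at h1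
    rw [hP3bdef, memP3_iff] at h2
    omega
  have d3ac : Disjoint P3a P3c := by
    rw [Set.disjoint_left]
    intro ω h1 h2
    rw [hP3adef, memP3_iff] at h1
    rw [hP3cdef, memP3_iff] at h2
    omega
  have d3bc : Disjoint P3b P3c := by
    rw [Set.disjoint_left]
    intro ω h1 h2
    rw [hP3bdef, memP3_iff] at h1
    rw [hP3cdef, memP3_iff] at h2
    omega
  -- measure of the union
  unfold parisianRuinBy
  rw [event_decomp Y r hr]
  rw [measure_union (d12.union_right (d13a.union_right (d13b.union_right d13c)))
      (((hMP _ _).union ((hMP _ _).union ((hMP _ _).union (hMP _ _)))))]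
  rw [measure_union (d23a.union_right (d23b.union_right d23c))
      ((hMP _ _).union ((hMP _ _).union (hMP _ _)))]
  rw [measure_union (d3ab.union_right d3ac) ((hMP _ _).union (hMP _ _))]
  rw [measure_union d3bc (hMP _ _)]
  simp only [hP1def, hP2def, hP3adef, hP3bdef, hP3cdef, prepend hm hind hid, ← hν, ← hΦ]
  have e0 : Φ ≠ ⊤ := measure_ne_top μ _
  have eq0 : ∀ k : ℕ, ν {k} ≠ ⊤ := fun k => measure_ne_top ν _
  have e1 : ν {0} * Φ ≠ ⊤ := ENNReal.mul_ne_top (eq0 0) e0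
  have e2 : ν {1} * (ν {0} * Φ) ≠ ⊤ := ENNReal.mul_ne_top (eq0 1) e1
  have e3 : ν {0} * (ν {2} * (ν {0} * Φ)) ≠ ⊤ :=
    ENNReal.mul_ne_top (eq0 0) (ENNReal.mul_ne_top (eq0 2) e1)
  have e4 : ν {1} * (ν {1} * (ν {0} * Φ)) ≠ ⊤ :=
    ENNReal.mul_ne_top (eq0 1) e2
  have e5 : ν {2} * (ν {0} * (ν {0} * Φ)) ≠ ⊤ :=
    ENNReal.mul_ne_top (eq0 2) (ENNReal.mul_ne_top (eq0 0) e1)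
  rw [ENNReal.toReal_add e1 (ENNReal.add_ne_top.2 ⟨e2,
      ENNReal.add_ne_top.2 ⟨e3, ENNReal.add_ne_top.2 ⟨e4, e5⟩⟩⟩),
    ENNReal.toReal_add e2 (ENNReal.add_ne_top.2 ⟨e3, ENNReal.add_ne_top.2 ⟨e4, e5⟩⟩),
    ENNReal.toReal_add e3 (ENNReal.add_ne_top.2 ⟨e4, e5⟩),
    ENNReal.toReal_add e4 e5]
  simp only [ENNReal.toReal_mul]
  rw [hpk 0, hpk 1, hpk 2, hφ]
  ring
end
end

section
/- In the discrete-time dual risk model with delay r ∈ ℕ⁺, the infinite-time Parisian survival probability factorizes through the classic dual ruin probability: for every u ∈ ℕ, φ*_r(u) = ψ*(u) · φ*_r(0) + φ*(u); equivalently, ψ*_r(u) = ψ*(u) · ψ*_r(0). -/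
open MeasureTheory ProbabilityTheory

noncomputable section

variable {Ω : Type*} [MeasurableSpace Ω]

namespace ParisianAux

variable {Y : ℕ → Ω → ℕ}

/-- deterministic reserve of a sequence -/
def sres (v : ℕ → ℕ) (u : ℤ) (m : ℕ) : ℤ :=
  u - m + ∑ i ∈ Finset.range m, (v i : ℤ)

lemma reserve_eq_sres (Y : ℕ → Ω → ℕ) (u : ℤ) (m : ℕ) (ω : Ω) :
    reserve Y u m ω = sres (fun i => Y i ω) u m := rfl

lemma sres_congr {v w : ℕ → ℕ} (u : ℤ) (m : ℕ) (h : ∀ i < m, v i = w i) :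
    sres v u m = sres w u m := by
  unfold sres
  congr 1
  exact Finset.sum_congr rfl fun i hi => by rw [h i (Finset.mem_range.mp hi)]

/-- extend a finite tuple by zeros -/
def ext0 {k : ℕ} (v : Fin k → ℕ) : ℕ → ℕ := fun i => if h : i < k then v ⟨i, h⟩ else 0

/-- an event depending on the coordinates `n, …, n+k-1` of the process -/
def ev (Y : ℕ → Ω → ℕ) (n k : ℕ) (Q : (Fin k → ℕ) → Prop) : Set Ω :=
  {ω | Q fun i => Y (n + i) ω}

lemma ev_zero (Y : ℕ → Ω → ℕ) (k : ℕ) (Q : (Fin k → ℕ) → Prop) :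
    ev Y 0 k Q = {ω | Q fun i => Y i ω} := by
  ext ω; simp only [ev, Set.mem_setOf_eq, zero_add]

lemma measure_atom {μ : Measure Ω} (hY : IsIID μ Y) (n k : ℕ) (v : Fin k → ℕ) :
    μ (⋂ i : Fin k, Y (n + i) ⁻¹' {v i}) = ∏ i : Fin k, μ (Y 0 ⁻¹' {v i}) := by
  classical
  set sets : ℕ → Set ℕ := fun j => {m | ∀ (i : Fin k), j = n + (i : ℕ) → m = v i} with hsets
  have hset : ∀ (i : Fin k), sets (n + (i : ℕ)) = {v i} := by
    intro i
    ext m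
    simp only [hsets, Set.mem_setOf_eq, Set.mem_singleton_iff]
    constructor
    · intro h; exact h i rfl
    · rintro rfl i' hi'
      have : (i : ℕ) = (i' : ℕ) := by omega
      rw [show i = i' from Fin.ext this]
  set S : Finset ℕ := (Finset.range k).map ⟨fun a => n + a, add_right_injective n⟩ with hS
  have hkey := hY.2.1.measure_inter_preimage_eq_mul S (sets := sets)
    (fun i _ => MeasurableSpace.measurableSet_top)
  have hinter : (⋂ j ∈ S, Y j ⁻¹' sets j) = ⋂ i : Fin k, Y (n + i) ⁻¹' {v i} := by
    ext ω
    simp only [Set.mem_iInter, hS, Finset.mem_map, Finset.mem_range,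
      Function.Embedding.coeFn_mk, Set.mem_preimage]
    constructor
    · intro h i
      have := h (n + (i : ℕ)) ⟨i, i.isLt, rfl⟩
      rw [hset i] at this
      exact this
    · rintro h j ⟨a, ha, rfl⟩
      rw [hset ⟨a, ha⟩]
      exact h ⟨a, ha⟩
  rw [hinter] at hkey
  rw [hkey, hS, Finset.prod_map]
  simp only [Function.Embedding.coeFn_mk]
  have h1 : ∀ a ∈ Finset.range k, μ (Y (n + a) ⁻¹' sets (n + a)) = μ (Y 0 ⁻¹' {ext0 v a}) := by
    intro a ha
    have ha' : a < k := Finset.mem_range.mp ha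
    have : sets (n + a) = {v ⟨a, ha'⟩} := hset ⟨a, ha'⟩
    rw [this, (hY.2.2 (n + a)).measure_mem_eq (measurableSet_singleton _)]
    congr 1
    simp [ext0, ha']
  rw [Finset.prod_congr rfl h1, ← Fin.prod_univ_eq_prod_range (fun a => μ (Y 0 ⁻¹' {ext0 v a})) k]
  exact Finset.prod_congr rfl fun i _ => by simp [ext0, i.isLt]

lemma ev_eq_iUnion (Y : ℕ → Ω → ℕ) (n k : ℕ) (Q : (Fin k → ℕ) → Prop) :
    ev Y n k Q = ⋃ v : {v : Fin k → ℕ // Q v}, ⋂ i : Fin k, Y (n + i) ⁻¹' {v.1 i} := by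
  ext ω
  simp only [ev, Set.mem_setOf_eq, Set.mem_iUnion, Set.mem_iInter, Set.mem_preimage,
    Set.mem_singleton_iff]
  constructor
  · intro h; exact ⟨⟨fun i => Y (n + i) ω, h⟩, fun i => rfl⟩
  · rintro ⟨v, hv⟩
    rw [show (fun i : Fin k => Y (n + (i:ℕ)) ω) = v.1 from funext hv]
    exact v.2

lemma measurableSet_atom (hm : ∀ i, Measurable (Y i)) (n k : ℕ) (v : Fin k → ℕ) :
    MeasurableSet (⋂ i : Fin k, Y (n + i) ⁻¹' {v i}) :=
  MeasurableSet.iInter fun i => (hm _) (measurableSet_singleton _)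

lemma disjoint_atoms (Y : ℕ → Ω → ℕ) (n k : ℕ) (Q : (Fin k → ℕ) → Prop) :
    Pairwise (Function.onFun Disjoint fun v : {v : Fin k → ℕ // Q v} =>
      ⋂ i : Fin k, Y (n + i) ⁻¹' {v.1 i}) := by
  intro v w hvw
  rw [Function.onFun, Set.disjoint_left]
  intro ω h1 h2
  simp only [Set.mem_iInter, Set.mem_preimage, Set.mem_singleton_iff] at h1 h2
  exact hvw (Subtype.ext (funext fun i => (h1 i).symm.trans (h2 i)))

lemma measurableSet_ev (hm : ∀ i, Measurable (Y i)) (n k : ℕ) (Q : (Fin k → ℕ) → Prop) :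
    MeasurableSet (ev Y n k Q) := by
  rw [ev_eq_iUnion]
  exact MeasurableSet.iUnion fun v => measurableSet_atom hm n k v.1

lemma measure_ev {μ : Measure Ω} (hY : IsIID μ Y) (n k : ℕ) (Q : (Fin k → ℕ) → Prop) :
    μ (ev Y n k Q) = ∑' v : {v : Fin k → ℕ // Q v}, ∏ i : Fin k, μ (Y 0 ⁻¹' {v.1 i}) := by
  rw [ev_eq_iUnion,
    measure_iUnion (disjoint_atoms Y n k Q) (fun v => measurableSet_atom hY.1 n k v.1)]
  exact tsum_congr fun v => measure_atom hY n k v.1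

set_option maxHeartbeats 2000000 in
lemma measure_ev_inter {μ : Measure Ω} (hY : IsIID μ Y) {n k : ℕ}
    (QA : (Fin n → ℕ) → Prop) (QB : (Fin k → ℕ) → Prop) :
    μ (ev Y 0 n QA ∩ ev Y n k QB) = μ (ev Y 0 n QA) * μ (ev Y 0 k QB) := by
  classical
  set QC : (Fin (n + k) → ℕ) → Prop :=
    fun w => QA (fun i => w (Fin.castAdd k i)) ∧ QB (fun j => w (Fin.natAdd n j)) with hQC
  have hset : ev Y 0 n QA ∩ ev Y n k QB = ev Y 0 (n + k) QC := by
    ext ω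
    simp only [ev, Set.mem_inter_iff, Set.mem_setOf_eq, hQC]
    have h1 : (fun i : Fin n => Y (0 + ((Fin.castAdd k i : Fin (n + k)) : ℕ)) ω)
        = fun i : Fin n => Y (0 + (i : ℕ)) ω := by
      funext i; simp
    have h2 : (fun j : Fin k => Y (0 + ((Fin.natAdd n j : Fin (n + k)) : ℕ)) ω)
        = fun j : Fin k => Y (n + (j : ℕ)) ω := by
      funext j; simp [Fin.natAdd]
    rw [h1, h2]
  rw [hset, measure_ev hY, measure_ev hY, measure_ev hY]
  set F : (Fin n → ℕ) → ENNReal := fun a => ∏ i : Fin n, μ (Y 0 ⁻¹' {a i}) with hF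
  set G : (Fin k → ℕ) → ENNReal := fun b => ∏ j : Fin k, μ (Y 0 ⁻¹' {b j}) with hG
  let E : {w : Fin (n + k) → ℕ // QC w} ≃ {v : Fin n → ℕ // QA v} × {v : Fin k → ℕ // QB v} :=
  { toFun := fun w => (⟨fun i => w.1 (Fin.castAdd k i), w.2.1⟩,
      ⟨fun j => w.1 (Fin.natAdd n j), w.2.2⟩)
    invFun := fun p => ⟨Fin.append p.1.1 p.2.1, by
      constructor
      · rw [show (fun i => Fin.append p.1.1 p.2.1 (Fin.castAdd k i)) = p.1.1 from
          funext fun i => Fin.append_left _ _ i]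
        exact p.1.2
      · rw [show (fun j => Fin.append p.1.1 p.2.1 (Fin.natAdd n j)) = p.2.1 from
          funext fun j => Fin.append_right _ _ j]
        exact p.2.2⟩
    left_inv := fun w => Subtype.ext (by
      funext i
      refine Fin.addCases (fun i => ?_) (fun j => ?_) i
      · exact Fin.append_left _ _ i
      · exact Fin.append_right _ _ j)
    right_inv := fun p => by
      refine Prod.ext ?_ ?_
      · exact Subtype.ext (funext fun i => Fin.append_left _ _ i)
      · exact Subtype.ext (funext fun j => Fin.append_right _ _ j) }
  have hEsymm : ∀ p, (∏ i : Fin (n + k), μ (Y 0 ⁻¹' {(E.symm p).1 i})) = F p.1.1 * G p.2.1 := by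
    intro p
    have : (E.symm p).1 = Fin.append p.1.1 p.2.1 := rfl
    rw [this, Fin.prod_univ_add (fun i => μ (Y 0 ⁻¹' {Fin.append p.1.1 p.2.1 i}))]
    congr 1
    · exact Finset.prod_congr rfl fun i _ => by rw [Fin.append_left]
    · exact Finset.prod_congr rfl fun j _ => by rw [Fin.append_right]
  calc (∑' w : {w : Fin (n + k) → ℕ // QC w}, ∏ i : Fin (n + k), μ (Y 0 ⁻¹' {w.1 i}))
      = ∑' p : {v : Fin n → ℕ // QA v} × {v : Fin k → ℕ // QB v},
          ∏ i : Fin (n + k), μ (Y 0 ⁻¹' {(E.symm p).1 i}) :=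
        (Equiv.tsum_eq E.symm (fun w => ∏ i : Fin (n + k), μ (Y 0 ⁻¹' {w.1 i}))).symm
    _ = ∑' p : {v : Fin n → ℕ // QA v} × {v : Fin k → ℕ // QB v}, F p.1.1 * G p.2.1 :=
        tsum_congr hEsymm
    _ = ∑' (a : {v : Fin n → ℕ // QA v}) (b : {v : Fin k → ℕ // QB v}), F a.1 * G b.1 :=
        ENNReal.tsum_prod (f := fun (a : {v : Fin n → ℕ // QA v}) (b : {v : Fin k → ℕ // QB v}) => F a.1 * G b.1)
    _ = ∑' a : {v : Fin n → ℕ // QA v}, F a.1 * ∑' b : {v : Fin k → ℕ // QB v}, G b.1 :=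
        tsum_congr fun a => ENNReal.tsum_mul_left
    _ = (∑' a : {v : Fin n → ℕ // QA v}, F a.1) * ∑' b : {v : Fin k → ℕ // QB v}, G b.1 :=
        ENNReal.tsum_mul_right

def win (r t : ℕ) (z : ℕ → ℕ) : Prop :=
  1 ≤ t ∧ sres z 0 (t - 1) = 0 ∧ sres z 0 t = -1 ∧
    ∀ m, t ≤ m → m ≤ t + r → sres z 0 m < 0

omit [MeasurableSpace Ω] in
lemma win_iff_parisianWindow (Y : ℕ → Ω → ℕ) (r t : ℕ) (ω : Ω) :
    win r t (fun i => Y i ω) ↔ parisianWindow Y 0 r t ω := Iff.rfl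

lemma win_congr {z z' : ℕ → ℕ} (r t : ℕ) (h : ∀ i < t + r, z i = z' i) :
    win r t z ↔ win r t z' := by
  have hs : ∀ m ≤ t + r, sres z 0 m = sres z' 0 m := fun m hm =>
    sres_congr 0 m fun i hi => h i (lt_of_lt_of_le hi hm)
  unfold win
  rw [hs (t - 1) (by omega), hs t (by omega)]
  refine and_congr Iff.rfl (and_congr Iff.rfl (and_congr Iff.rfl (forall_congr' fun m => ?_)))
  constructor
  · intro hx h1 h2; rw [← hs m h2]; exact hx h1 h2
  · intro hx h1 h2; rw [hs m h2]; exact hx h1 h2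

def QA (u : ℤ) (n : ℕ) : (Fin n → ℕ) → Prop :=
  fun v => sres (ext0 v) u n = 0 ∧ ∀ m < n, sres (ext0 v) u m ≠ 0

def QB (r s : ℕ) : (Fin (s + r) → ℕ) → Prop :=
  fun w => win r s (ext0 w) ∧ ∀ t < s, ¬ win r t (ext0 w)

lemma ev_QA (Y : ℕ → Ω → ℕ) (u : ℤ) (n : ℕ) :
    ev Y 0 n (QA u n) = dualRuinAt Y u n := by
  rw [ev_zero]
  ext ω
  simp only [Set.mem_setOf_eq, dualRuinAt, QA]
  have hs : ∀ m ≤ n, sres (ext0 fun i : Fin n => Y i ω) u m = reserve Y u m ω := by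
    intro m hm
    rw [reserve_eq_sres]
    exact sres_congr u m fun i hi => by simp [ext0, show i < n by omega]
  rw [hs n le_rfl]
  exact ⟨fun ⟨h1, h2⟩ => ⟨h1, fun m hm => by rw [← hs m hm.le]; exact h2 m hm⟩,
    fun ⟨h1, h2⟩ => ⟨h1, fun m hm => by rw [hs m hm.le]; exact h2 m hm⟩⟩

lemma ev_QB (Y : ℕ → Ω → ℕ) (r n s : ℕ) :
    ev Y n (s + r) (QB r s) =
      {ω | win r s (fun i => Y (n + i) ω) ∧ ∀ t < s, ¬ win r t (fun i => Y (n + i) ω)} := by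
  ext ω
  simp only [ev, Set.mem_setOf_eq, QB]
  have hw : ∀ t ≤ s, (win r t (ext0 fun j : Fin (s + r) => Y (n + (j : ℕ)) ω) ↔
      win r t (fun i => Y (n + i) ω)) := by
    intro t ht
    exact win_congr r t fun i hi => by simp [ext0, show i < s + r by omega]
  rw [hw s le_rfl]
  refine and_congr Iff.rfl (forall_congr' fun t => ?_)
  constructor
  · intro h ht; rw [← hw t ht.le]; exact h ht
  · intro h ht; rw [hw t ht.le]; exact h ht

omit [MeasurableSpace Ω] in
lemma sres_shift (Y : ℕ → Ω → ℕ) (u : ℤ) (n : ℕ) (ω : Ω) (h0 : reserve Y u n ω = 0) (m : ℕ) :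
    sres (fun i => Y (n + i) ω) 0 m = reserve Y u (n + m) ω := by
  have hsum := Finset.sum_range_add (fun i => (Y i ω : ℤ)) n m
  simp only [reserve, sres] at h0 ⊢
  rw [hsum]
  push_cast
  push_cast at h0
  linarith

omit [MeasurableSpace Ω] in
lemma win_shift (Y : ℕ → Ω → ℕ) (u : ℤ) (r n t : ℕ) (ω : Ω)
    (h0 : reserve Y u n ω = 0) (ht : 1 ≤ t) :
    win r t (fun i => Y (n + i) ω) ↔ parisianWindow Y u r (n + t) ω := by
  have hs := sres_shift Y u n ω h0
  simp only [win, parisianWindow]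
  constructor
  · rintro ⟨h1, h2, h3, h4⟩
    refine ⟨by omega, ?_, ?_, ?_⟩
    · rw [show n + t - 1 = n + (t - 1) by omega, ← hs]; exact h2
    · rw [← hs]; exact h3
    · intro m hm1 hm2
      rw [show m = n + (m - n) by omega, ← hs]
      exact h4 (m - n) (by omega) (by omega)
  · rintro ⟨h1, h2, h3, h4⟩
    refine ⟨ht, ?_, ?_, ?_⟩
    · rw [hs, show n + (t - 1) = n + t - 1 by omega]; exact h2
    · rw [hs]; exact h3
    · intro m hm1 hm2
      rw [hs]
      exact h4 (n + m) (by omega) (by omega)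

end ParisianAux

open ParisianAux in
/-- The infinite-time Parisian survival probability factorizes through the classic dual
ruin probability: `φ*_r(u) = ψ*(u) φ*_r(0) + φ*(u)`, equivalently
`ψ*_r(u) = ψ*(u) ψ*_r(0)`. -/
theorem parisian_ruin_factorization
    (μ : Measure Ω) [IsProbabilityMeasure μ] (Y : ℕ → Ω → ℕ) (hY : IsIID μ Y)
    (hnet : NetProfit μ Y) (r : ℕ) (hr : 1 ≤ r) (u : ℕ) :
    (1 - parisianRuin μ Y (u : ℤ) r
        = dualRuinProb μ Y (u : ℤ) * (1 - parisianRuin μ Y 0 r)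
          + (1 - dualRuinProb μ Y (u : ℤ))) ∧
      parisianRuin μ Y (u : ℤ) r
        = dualRuinProb μ Y (u : ℤ) * parisianRuin μ Y 0 r := by
  classical
  have hdecomp : {ω : Ω | ∃ s, parisianWindow Y (u : ℤ) r s ω}
      = ⋃ q : ℕ × ℕ, (ev Y 0 q.1 (QA (u : ℤ) q.1) ∩ ev Y q.1 (q.2 + r) (QB r q.2)) := by
    ext ω
    simp only [Set.mem_setOf_eq, Set.mem_iUnion, Set.mem_inter_iff]
    constructor
    · rintro ⟨s, hwin⟩
      have hruin : ∃ n, reserve Y (u : ℤ) n ω = 0 := ⟨s - 1, hwin.2.1⟩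
      have hn0 : reserve Y (u : ℤ) (Nat.find hruin) ω = 0 := Nat.find_spec hruin
      set n := Nat.find hruin with hn
      have hns : n + 1 ≤ s := by
        have h1 := Nat.find_min' hruin hwin.2.1
        have h2 : 1 ≤ s := hwin.1
        omega
      have hwin' : win r (s - n) (fun i => Y (n + i) ω) := by
        rw [win_shift Y (u : ℤ) r n (s - n) ω hn0 (by omega), show n + (s - n) = s by omega]
        exact hwin
      have hex : ∃ t, win r t (fun i => Y (n + i) ω) := ⟨s - n, hwin'⟩
      refine ⟨(n, Nat.find hex), ?_, ?_⟩
      · rw [ev_QA]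
        exact ⟨hn0, fun m hm => Nat.find_min hruin hm⟩
      · rw [ev_QB]
        exact ⟨Nat.find_spec hex, fun t htx => Nat.find_min hex htx⟩
    · rintro ⟨⟨n, s⟩, h1, h2⟩
      rw [ev_QA] at h1
      rw [ev_QB] at h2
      obtain ⟨h1a, _⟩ := h1
      obtain ⟨h2a, _⟩ := h2
      exact ⟨n + s, (win_shift Y (u : ℤ) r n s ω h1a h2a.1).mp h2a⟩
  have hdisj : Pairwise (Function.onFun Disjoint fun q : ℕ × ℕ =>
      ev Y 0 q.1 (QA (u : ℤ) q.1) ∩ ev Y q.1 (q.2 + r) (QB r q.2)) := by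
    rintro ⟨n, s⟩ ⟨n', s'⟩ hne
    rw [Function.onFun, Set.disjoint_left]
    rintro ω ⟨ha, hb⟩ ⟨ha', hb'⟩
    rw [ev_QA] at ha ha'
    rw [ev_QB] at hb hb'
    obtain ⟨ha1, ha2⟩ := ha; obtain ⟨ha1', ha2'⟩ := ha'
    obtain ⟨hb1, hb2⟩ := hb; obtain ⟨hb1', hb2'⟩ := hb'
    have hnn : n = n' := by
      by_contra h
      rcases Nat.lt_or_ge n n' with hlt | hge
      · exact ha2' n hlt ha1
      · exact ha2 n' (by omega) ha1'
    subst hnn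
    have hss : s = s' := by
      by_contra h
      rcases Nat.lt_or_ge s s' with hlt | hge
      · exact hb2' s hlt hb1
      · exact hb2 s' (by omega) hb1'
    exact hne (by rw [hss])
  have hruinU : (⋃ n, ev Y 0 n (QA (u : ℤ) n)) = {ω : Ω | ∃ n, reserve Y (u : ℤ) n ω = 0} := by
    ext ω
    simp only [Set.mem_iUnion, ev_QA, dualRuinAt, Set.mem_setOf_eq]
    constructor
    · rintro ⟨n, h, -⟩; exact ⟨n, h⟩
    · rintro ⟨m, h⟩
      have hex : ∃ m, reserve Y (u : ℤ) m ω = 0 := ⟨m, h⟩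
      exact ⟨Nat.find hex, Nat.find_spec hex, fun m' hm' => Nat.find_min hex hm'⟩
  have hruinD : Pairwise (Function.onFun Disjoint fun n => ev Y 0 n (QA (u : ℤ) n)) := by
    intro n n' hne
    rw [Function.onFun, Set.disjoint_left]
    intro ω h h'
    rw [ev_QA] at h h'
    obtain ⟨h1, h2⟩ := h; obtain ⟨h1', h2'⟩ := h'
    rcases Nat.lt_or_ge n n' with hlt | hge
    · exact h2' n hlt h1
    · exact h2 n' (by omega) h1'
  have hP0U : (⋃ s, ev Y 0 (s + r) (QB r s)) = {ω : Ω | ∃ s, parisianWindow Y 0 r s ω} := by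
    ext ω
    simp only [Set.mem_iUnion, ev_QB, Set.mem_setOf_eq, zero_add]
    constructor
    · rintro ⟨s, h, -⟩; exact ⟨s, (win_iff_parisianWindow Y r s ω).mp h⟩
    · rintro ⟨s, h⟩
      have hex : ∃ t, win r t (fun i => Y i ω) := ⟨s, (win_iff_parisianWindow Y r s ω).mpr h⟩
      exact ⟨Nat.find hex, Nat.find_spec hex, fun t ht => Nat.find_min hex ht⟩
  have hP0D : Pairwise (Function.onFun Disjoint fun s => ev Y 0 (s + r) (QB r s)) := by
    intro s s' hne
    rw [Function.onFun, Set.disjoint_left]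
    intro ω h h'
    rw [ev_QB] at h h'
    obtain ⟨h1, h2⟩ := h; obtain ⟨h1', h2'⟩ := h'
    rcases Nat.lt_or_ge s s' with hlt | hge
    · exact h2' s hlt h1
    · exact h2 s' (by omega) h1'
  have hkey : μ {ω : Ω | ∃ s, parisianWindow Y (u : ℤ) r s ω}
      = μ {ω : Ω | ∃ n, reserve Y (u : ℤ) n ω = 0} * μ {ω : Ω | ∃ s, parisianWindow Y 0 r s ω} := by
    rw [hdecomp, measure_iUnion hdisj (fun q =>
      (measurableSet_ev hY.1 0 q.1 (QA (u : ℤ) q.1)).inter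
        (measurableSet_ev hY.1 q.1 (q.2 + r) (QB r q.2)))]
    calc (∑' q : ℕ × ℕ, μ (ev Y 0 q.1 (QA (u : ℤ) q.1) ∩ ev Y q.1 (q.2 + r) (QB r q.2)))
        = ∑' q : ℕ × ℕ, μ (ev Y 0 q.1 (QA (u : ℤ) q.1)) * μ (ev Y 0 (q.2 + r) (QB r q.2)) :=
          tsum_congr fun q => measure_ev_inter hY _ _
      _ = ∑' (n : ℕ) (s : ℕ), μ (ev Y 0 n (QA (u : ℤ) n)) * μ (ev Y 0 (s + r) (QB r s)) :=
          ENNReal.tsum_prod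
            (f := fun n s => μ (ev Y 0 n (QA (u : ℤ) n)) * μ (ev Y 0 (s + r) (QB r s)))
      _ = ∑' n : ℕ, μ (ev Y 0 n (QA (u : ℤ) n)) * ∑' s : ℕ, μ (ev Y 0 (s + r) (QB r s)) :=
          tsum_congr fun n => ENNReal.tsum_mul_left
      _ = (∑' n : ℕ, μ (ev Y 0 n (QA (u : ℤ) n))) * ∑' s : ℕ, μ (ev Y 0 (s + r) (QB r s)) :=
          ENNReal.tsum_mul_right
      _ = μ {ω : Ω | ∃ n, reserve Y (u : ℤ) n ω = 0} * μ {ω : Ω | ∃ s, parisianWindow Y 0 r s ω} := by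
          rw [← measure_iUnion hruinD (fun n => measurableSet_ev hY.1 0 n _),
            ← measure_iUnion hP0D (fun s => measurableSet_ev hY.1 0 (s + r) _), hruinU, hP0U]
  have h2 : parisianRuin μ Y (u : ℤ) r = dualRuinProb μ Y (u : ℤ) * parisianRuin μ Y 0 r := by
    unfold parisianRuin dualRuinProb
    rw [hkey, ENNReal.toReal_mul]
  exact ⟨by rw [h2]; ring, h2⟩
end
end
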